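/- arXiv:2507.03451 — 6 statements merged into one kernel-verified Lean document; each statement's English description precedes it below -/
import Mathlib

section
/- For every θ ∈ (0,π), the partial sums ∑_{l=1}^{N} (−(l+1)/(l(l+2))) · sin((l+1)θ)/sin θ converge as N → ∞ to −(π − θ) cos θ / (2 sin θ) + 1/4. -/
open Complex Filter Finset

private lemma polar (θ : ℝ) :
    1 - Complex.exp (θ * I) =
      ((2 * Real.sin (θ / 2) : ℝ) : ℂ) * Complex.exp (((θ - Real.pi) / 2 : ℝ) * I) := by
  apply Complex.ext
  · simp only [Complex.sub_re, Complex.one_re, Complex.exp_ofReal_mul_I_re,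
      Complex.re_ofReal_mul, Complex.exp_ofReal_mul_I_im]
    rw [show (θ - Real.pi) / 2 = θ / 2 - Real.pi / 2 by ring, Real.cos_sub,
      Real.cos_pi_div_two, Real.sin_pi_div_two]
    have h1 : Real.sin (θ/2) ^ 2 = 1/2 - Real.cos (2*(θ/2))/2 := Real.sin_sq_eq_half_sub _
    rw [show 2*(θ/2) = θ by ring] at h1
    nlinarith
  · simp only [Complex.sub_im, Complex.one_im, Complex.exp_ofReal_mul_I_im,
      Complex.im_ofReal_mul]
    rw [show (θ - Real.pi) / 2 = θ / 2 - Real.pi / 2 by ring, Real.sin_sub,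
      Real.cos_pi_div_two, Real.sin_pi_div_two]
    have h2 : Real.sin θ = 2 * Real.sin (θ/2) * Real.cos (θ/2) := by
      rw [← Real.sin_two_mul]; ring_nf
    nlinarith

private lemma sinSum (θ : ℝ) (hθ : θ ∈ Set.Ioo 0 Real.pi) :
    Tendsto (fun N : ℕ => ∑ l ∈ Finset.Icc 1 N, Real.sin (l * θ) / l) atTop
      (nhds ((Real.pi - θ) / 2)) := by
  obtain ⟨hθ0, hθπ⟩ := hθ
  set z : ℂ := Complex.exp (θ * I) with hzdef
  have hshalf : 0 < Real.sin (θ / 2) :=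
    Real.sin_pos_of_pos_of_lt_pi (by linarith) (by linarith [Real.pi_pos])
  have hpolar := polar θ
  have hexpne : Complex.exp (((θ - Real.pi) / 2 : ℝ) * I) ≠ 0 := Complex.exp_ne_zero _
  have hne : (1 : ℂ) - z ≠ 0 := by
    rw [hpolar]
    exact mul_ne_zero (by exact_mod_cast ne_of_gt (by linarith)) hexpne
  have hz1 : ‖z‖ = 1 := Complex.norm_exp_ofReal_mul_I θ
  have hzne1 : z ≠ 1 := fun h => hne (by rw [h, sub_self])
  -- bounded partial sums
  have hbdd : ∀ n, ‖∑ i ∈ range n, z ^ (i + 1)‖ ≤ 2 / ‖1 - z‖ := by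
    intro n
    have : ∑ i ∈ range n, z ^ (i + 1) = z * ((z ^ n - 1) / (z - 1)) := by
      rw [← geom_sum_eq hzne1, Finset.mul_sum]
      exact Finset.sum_congr rfl fun i _ => by ring
    rw [this, norm_mul, hz1, one_mul, norm_div]
    have h1 : ‖z ^ n - 1‖ ≤ 2 := by
      calc ‖z ^ n - 1‖ ≤ ‖z ^ n‖ + ‖(1:ℂ)‖ := norm_sub_le _ _
        _ = 2 := by rw [norm_pow, hz1, one_pow, norm_one]; norm_num
    have h2 : ‖z - 1‖ = ‖1 - z‖ := norm_sub_rev _ _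
    rw [h2]
    gcongr
  -- Dirichlet's test
  have hanti : Antitone (fun n : ℕ => ((n : ℝ) + 1)⁻¹) := by
    intro a b hab
    apply inv_anti₀ (by positivity)
    exact_mod_cast by linarith [(Nat.cast_le (α := ℝ)).mpr hab]
  have h0 : Tendsto (fun n : ℕ => ((n : ℝ) + 1)⁻¹) atTop (nhds 0) := by
    simpa [one_div] using (tendsto_one_div_add_atTop_nhds_zero_nat :
      Tendsto (fun n : ℕ => 1 / ((n : ℝ) + 1)) atTop (nhds 0))
  have cau : CauchySeq fun n => ∑ i ∈ range n, ((i : ℝ) + 1)⁻¹ • z ^ (i + 1) :=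
    hanti.cauchySeq_series_mul_of_tendsto_zero_of_bounded h0 hbdd
  obtain ⟨T, hT⟩ := cauchySeq_tendsto_of_complete cau
  set c : ℕ → ℂ := fun n => z ^ n / n with hcdef
  have hc : ∀ n, ∑ i ∈ range (n + 1), c i = ∑ i ∈ range n, ((i : ℝ) + 1)⁻¹ • z ^ (i + 1) := by
    intro n
    rw [Finset.sum_range_succ']
    simp only [hcdef, Nat.cast_zero, div_zero, add_zero]
    refine Finset.sum_congr rfl fun i _ => ?_
    rw [Complex.real_smul]
    push_cast
    rw [div_eq_inv_mul]
  have hR : Tendsto (fun n => ∑ i ∈ range n, c i) atTop (nhds T) := by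
    rw [← tendsto_add_atTop_iff_nat 1]
    simpa only [hc] using hT
  -- Abel's limit theorem
  have abel := Complex.tendsto_tsum_powerSeries_nhdsWithin_lt hR
  -- the limit along the same filter of -log(1 - z*w)
  have hre : (0:ℝ) < (1 - z).re := by
    have : z.re = Real.cos θ := Complex.exp_ofReal_mul_I_re θ
    simp only [Complex.sub_re, Complex.one_re, this]
    have : Real.cos θ < Real.cos 0 := by
      apply Real.cos_lt_cos_of_nonneg_of_le_pi (le_refl 0) (le_of_lt hθπ) hθ0
    simp only [Real.cos_zero] at this
    linarith
  have hcont : ContinuousAt (fun w : ℂ => -Complex.log (1 - z * w)) 1 := by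
    have h1 : ContinuousAt (fun w : ℂ => 1 - z * w) 1 := by fun_prop
    exact (h1.clog (by rw [mul_one]; exact Or.inl hre)).neg
  have hfle : (nhdsWithin (1:ℝ) (Set.Iio 1)).map Complex.ofReal ≤ nhds (1 : ℂ) := by
    calc (nhdsWithin (1:ℝ) (Set.Iio 1)).map Complex.ofReal
        ≤ (nhds (1:ℝ)).map Complex.ofReal := map_mono nhdsWithin_le_nhds
      _ ≤ nhds ((1:ℝ):ℂ) := Complex.continuous_ofReal.continuousAt
      _ = nhds (1:ℂ) := by norm_num
  have hlog : Tendsto (fun w : ℂ => -Complex.log (1 - z * w))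
      ((nhdsWithin (1:ℝ) (Set.Iio 1)).map Complex.ofReal) (nhds (-Complex.log (1 - z))) := by
    have := hcont.tendsto.mono_left hfle
    simpa using this
  have heq : (fun w : ℂ => ∑' n, c n * w ^ n) =ᶠ[(nhdsWithin (1:ℝ) (Set.Iio 1)).map Complex.ofReal]
      (fun w : ℂ => -Complex.log (1 - z * w)) := by
    rw [Filter.eventuallyEq_iff_exists_mem]
    refine ⟨Complex.ofReal '' Set.Ioo (-1) 1, ?_, ?_⟩
    · apply Filter.image_mem_map
      exact Ioo_mem_nhdsLT_of_mem (by constructor <;> norm_num)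
    · rintro w ⟨x, ⟨hx1, hx2⟩, rfl⟩
      show ∑' n, c n * (x:ℂ) ^ n = -Complex.log (1 - z * x)
      have hxn : ‖z * (x:ℂ)‖ < 1 := by
        rw [norm_mul, hz1, one_mul, Complex.norm_real, Real.norm_eq_abs, abs_lt]
        exact ⟨hx1, hx2⟩
      have hs := hasSum_taylorSeries_neg_log hxn
      rw [← hs.tsum_eq]
      apply tsum_congr
      intro n
      simp only [hcdef, mul_pow]
      ring
  have hTlog : T = -Complex.log (1 - z) := by
    haveI : ((nhdsWithin (1:ℝ) (Set.Iio 1)).map Complex.ofReal).NeBot := Filter.map_neBot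
    exact tendsto_nhds_unique abel (hlog.congr' heq.symm)
  -- compute the imaginary part
  have hTim : T.im = (Real.pi - θ) / 2 := by
    rw [hTlog]
    simp only [Complex.neg_im, Complex.log_im]
    rw [hpolar, Complex.arg_real_mul _ (by linarith : (0:ℝ) < 2 * Real.sin (θ/2))]
    rw [show Complex.exp (((θ - Real.pi) / 2 : ℝ) * I)
        = Complex.cos ((θ - Real.pi) / 2 : ℝ) + Complex.sin ((θ - Real.pi) / 2 : ℝ) * I from
      Complex.exp_mul_I _]
    rw [Complex.arg_cos_add_sin_mul_I
      (by constructor <;> [linarith [Real.pi_pos]; linarith [Real.pi_pos]] :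
        (θ - Real.pi) / 2 ∈ Set.Ioc (-Real.pi) Real.pi)]
    ring
  -- conclude
  have him : Tendsto (fun n => (∑ i ∈ range (n + 1), c i).im) atTop (nhds T.im) :=
    (Complex.continuous_im.continuousAt.tendsto.comp hR).comp (tendsto_add_atTop_nat 1)
  rw [← hTim]
  apply him.congr
  intro N
  rw [Complex.im_sum]
  rw [Finset.sum_range_succ']
  have h0 : (c 0).im = 0 := by simp [hcdef]
  rw [h0, add_zero]
  rw [← Finset.Ico_add_one_right_eq_Icc, Finset.sum_Ico_eq_sum_range]
  refine Finset.sum_congr rfl fun i _ => ?_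
  have hz : z ^ (i + 1) = Complex.exp ((((i:ℝ) + 1) * θ : ℝ) * I) := by
    rw [← Complex.exp_nat_mul]
    push_cast
    ring_nf
  rw [show (1 + i) = (i + 1) by ring]
  simp only [hcdef, hz]
  rw [Complex.div_natCast_im, Complex.exp_ofReal_mul_I_im]
  push_cast
  ring

private lemma stepAlg (a s c S2 C2 : ℝ) (hs : s ≠ 0) (h1 : a + 1 ≠ 0) (h3 : a + 3 ≠ 0)
    (hp : s ^ 2 + c ^ 2 = 1) :
    -(a + 2) / ((a + 1) * (a + 3)) * (S2 / s)
      = -(c / (2 * s)) * ((S2 * c - C2 * s) / (a + 1) + (S2 * c + C2 * s) / (a + 3))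
        + (1 / 2) * ((C2 * c - S2 * s) / (a + 3) - (C2 * c + S2 * s) / (a + 1)) := by
  have expand : -(c / (2 * s)) * ((S2 * c - C2 * s) / (a + 1) + (S2 * c + C2 * s) / (a + 3))
        + (1 / 2) * ((C2 * c - S2 * s) / (a + 3) - (C2 * c + S2 * s) / (a + 1))
      = -(S2 * (s ^ 2 + c ^ 2)) * (a + 2) / ((a + 1) * (a + 3) * s) := by
    field_simp
    ring
  rw [expand, hp]
  field_simp

open Filter in
/-- For `θ ∈ (0,π)`, the partial sums
`∑_{l=1}^N (-(l+1)/(l(l+2))) sin((l+1)θ)/sin θ` converge, as `N → ∞`, to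
`-(π - θ) cos θ/(2 sin θ) + 1/4`. -/
theorem stmt_9 (θ : ℝ) (hθ : θ ∈ Set.Ioo 0 Real.pi) :
    Tendsto (fun N : ℕ => ∑ l ∈ Finset.Icc 1 N,
        (-((l : ℝ) + 1) / ((l : ℝ) * ((l : ℝ) + 2))) *
          (Real.sin (((l : ℝ) + 1) * θ) / Real.sin θ))
      atTop
      (nhds (-(Real.pi - θ) * Real.cos θ / (2 * Real.sin θ) + 1 / 4)) := by
  obtain ⟨hθ0, hθπ⟩ := hθ
  have hs : 0 < Real.sin θ := Real.sin_pos_of_pos_of_lt_pi hθ0 hθπ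
  set S : ℕ → ℝ := fun M => ∑ l ∈ Finset.Icc 1 M, Real.sin (l * θ) / l with hSdef
  have pythag := Real.sin_sq_add_cos_sq θ
  have key : ∀ N : ℕ, ∑ l ∈ Finset.Icc 1 N,
        (-((l : ℝ) + 1) / ((l : ℝ) * ((l : ℝ) + 2))) *
          (Real.sin (((l : ℝ) + 1) * θ) / Real.sin θ)
      = -(Real.cos θ / (2 * Real.sin θ)) * (S N + S (N + 2))
        + (Real.cos θ / (2 * Real.sin θ)) * (Real.sin θ + Real.sin (2 * θ) / 2)
        - (1 / 2) * (Real.cos θ + Real.cos (2 * θ) / 2)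
        + (1 / 2) * (Real.cos (((N : ℝ) + 1) * θ) / ((N : ℝ) + 1)
            + Real.cos (((N : ℝ) + 2) * θ) / ((N : ℝ) + 2)) := by
    intro N
    induction N with
    | zero =>
      have h2 : S 2 = Real.sin (1 * θ) / 1 + Real.sin (2 * θ) / 2 := by
        simp only [hSdef]
        rw [show Finset.Icc 1 2 = {1, 2} by decide]
        rw [Finset.sum_insert (by decide), Finset.sum_singleton]
        push_cast
        ring
      have h0 : S 0 = 0 := by
        simp only [hSdef]
        simp
      rw [show Finset.Icc 1 0 = (∅ : Finset ℕ) from rfl, Finset.sum_empty, h0, h2]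
      push_cast
      ring
    | succ N ih =>
      have hstep : ∀ (M : ℕ), S (M + 1) = S M + Real.sin (((M : ℝ) + 1) * θ) / ((M : ℝ) + 1) := by
        intro M
        simp only [hSdef]
        rw [Finset.sum_Icc_succ_top (Nat.one_le_iff_ne_zero.mpr (Nat.succ_ne_zero M))]
        push_cast
        ring
      rw [Finset.sum_Icc_succ_top (Nat.one_le_iff_ne_zero.mpr (Nat.succ_ne_zero N)), ih]
      rw [show N + 1 + 2 = (N + 2) + 1 from rfl, hstep (N + 2), hstep N]
      push_cast
      set a : ℝ := (N : ℝ) with hadef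
      have ha1 : a + 1 ≠ 0 := by positivity
      have ha3 : a + 3 ≠ 0 := by positivity
      have hs1 : Real.sin ((a + 1) * θ)
          = Real.sin ((a + 2) * θ) * Real.cos θ - Real.cos ((a + 2) * θ) * Real.sin θ := by
        rw [show (a + 1) * θ = (a + 2) * θ - θ by ring, Real.sin_sub]
      have hs3 : Real.sin ((a + 3) * θ)
          = Real.sin ((a + 2) * θ) * Real.cos θ + Real.cos ((a + 2) * θ) * Real.sin θ := by
        rw [show (a + 3) * θ = (a + 2) * θ + θ by ring, Real.sin_add]
      have hc1 : Real.cos ((a + 1) * θ)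
          = Real.cos ((a + 2) * θ) * Real.cos θ + Real.sin ((a + 2) * θ) * Real.sin θ := by
        rw [show (a + 1) * θ = (a + 2) * θ - θ by ring, Real.cos_sub]
      have hc3 : Real.cos ((a + 3) * θ)
          = Real.cos ((a + 2) * θ) * Real.cos θ - Real.sin ((a + 2) * θ) * Real.sin θ := by
        rw [show (a + 3) * θ = (a + 2) * θ + θ by ring, Real.cos_add]
      rw [show a + 1 + 1 = a + 2 by ring, show a + 1 + 2 = a + 3 by ring,
        show a + 2 + 1 = a + 3 by ring]
      rw [hs1, hs3, hc1, hc3]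
      linear_combination stepAlg a (Real.sin θ) (Real.cos θ)
        (Real.sin ((a + 2) * θ)) (Real.cos ((a + 2) * θ)) (ne_of_gt hs) ha1 ha3 pythag
  -- limits
  have hS : Tendsto S atTop (nhds ((Real.pi - θ) / 2)) := sinSum θ ⟨hθ0, hθπ⟩
  have hS2 : Tendsto (fun N => S (N + 2)) atTop (nhds ((Real.pi - θ) / 2)) :=
    hS.comp (tendsto_add_atTop_nat 2)
  have hinv : Tendsto (fun N : ℕ => ((N : ℝ) + 1)⁻¹) atTop (nhds 0) := by
    simpa [one_div] using (tendsto_one_div_add_atTop_nhds_zero_nat :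
      Tendsto (fun n : ℕ => 1 / ((n : ℝ) + 1)) atTop (nhds 0))
  have hcos1 : Tendsto (fun N : ℕ => Real.cos (((N : ℝ) + 1) * θ) / ((N : ℝ) + 1))
      atTop (nhds 0) := by
    apply squeeze_zero_norm _ hinv
    intro n
    rw [Real.norm_eq_abs, abs_div, abs_of_pos (show (0:ℝ) < (n:ℝ)+1 by positivity), ← one_div]
    gcongr
    · exact Real.abs_cos_le_one _
  have hcos2 : Tendsto (fun N : ℕ => Real.cos (((N : ℝ) + 2) * θ) / ((N : ℝ) + 2))
      atTop (nhds 0) := by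
    apply squeeze_zero_norm _ hinv
    intro n
    rw [Real.norm_eq_abs, abs_div, abs_of_pos (show (0:ℝ) < (n:ℝ)+2 by positivity), ← one_div]
    apply div_le_div₀ (by norm_num) (Real.abs_cos_le_one _) (by positivity) (by linarith)
  have combined : Tendsto (fun N : ℕ =>
      -(Real.cos θ / (2 * Real.sin θ)) * (S N + S (N + 2))
        + (Real.cos θ / (2 * Real.sin θ)) * (Real.sin θ + Real.sin (2 * θ) / 2)
        - (1 / 2) * (Real.cos θ + Real.cos (2 * θ) / 2)
        + (1 / 2) * (Real.cos (((N : ℝ) + 1) * θ) / ((N : ℝ) + 1)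
            + Real.cos (((N : ℝ) + 2) * θ) / ((N : ℝ) + 2))) atTop
      (nhds (-(Real.cos θ / (2 * Real.sin θ)) * ((Real.pi - θ) / 2 + (Real.pi - θ) / 2)
        + (Real.cos θ / (2 * Real.sin θ)) * (Real.sin θ + Real.sin (2 * θ) / 2)
        - (1 / 2) * (Real.cos θ + Real.cos (2 * θ) / 2)
        + (1 / 2) * (0 + 0))) := by
    exact ((((hS.add hS2).const_mul _).add_const _).sub_const _).add
      ((hcos1.add hcos2).const_mul _)
  have hval : -(Real.cos θ / (2 * Real.sin θ)) * ((Real.pi - θ) / 2 + (Real.pi - θ) / 2)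
        + (Real.cos θ / (2 * Real.sin θ)) * (Real.sin θ + Real.sin (2 * θ) / 2)
        - (1 / 2) * (Real.cos θ + Real.cos (2 * θ) / 2)
        + (1 / 2) * (0 + 0)
      = -(Real.pi - θ) * Real.cos θ / (2 * Real.sin θ) + 1 / 4 := by
    rw [Real.sin_two_mul, Real.cos_two_mul]
    field_simp
    ring
  rw [← hval]
  exact combined.congr fun N => (key N).symm
end

section
/- For every θ ∈ (0,π) with t = cos θ, the partial sums ∑_{l=0, l≠1}^{N} (l+1)/(3 - l(l+2)) · sin((l+1)θ)/sin θ converge as N → ∞ to (π − θ)(1 − 2t²)/(2√(1 − t²)) + t/4. -/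
open Filter Finset Complex Topology

lemma aux_log {z : ℂ} (hnorm : ‖z‖ = 1) (hz1 : z ≠ 1) (hslit : (1 - z) ∈ Complex.slitPlane) :
    Tendsto (fun N : ℕ => ∑ k ∈ Finset.range N, z ^ k / k) atTop (𝓝 (-Complex.log (1 - z))) := by
  set A : ℕ → ℂ := fun N => ∑ k ∈ Finset.range N, z ^ k / k with hA
  have hz0 : z ≠ 0 := by intro h; rw [h] at hnorm; simp at hnorm
  have hzsub : z - 1 ≠ 0 := sub_ne_zero.mpr hz1
  -- Cauchy via Dirichlet's test
  have hcauchy : CauchySeq (fun n : ℕ => ∑ i ∈ Finset.range n, ((i : ℝ) + 1)⁻¹ • z ^ (i + 1)) := by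
    apply Antitone.cauchySeq_series_mul_of_tendsto_zero_of_bounded (b := 2 / ‖z - 1‖)
    · intro a b hab
      have : (0:ℝ) < (a:ℝ) + 1 := by positivity
      apply inv_anti₀ this (by exact_mod_cast by omega)
    · exact_mod_cast (tendsto_one_div_add_atTop_nhds_zero_nat : Tendsto (fun n : ℕ => 1 / ((n : ℝ) + 1)) atTop (𝓝 0)).congr (by simp [one_div])
    · intro n
      have : ∑ i ∈ Finset.range n, z ^ (i + 1) = z * ((z ^ n - 1) / (z - 1)) := by
        rw [← geom_sum_eq hz1]
        rw [Finset.mul_sum]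
        exact Finset.sum_congr rfl fun i _ => by ring
      rw [this, norm_mul, hnorm, one_mul, norm_div]
      rw [div_le_div_iff₀ (norm_pos_iff.mpr hzsub) (norm_pos_iff.mpr hzsub)]
      calc ‖z ^ n - 1‖ * ‖z - 1‖ ≤ (‖z ^ n‖ + ‖(1:ℂ)‖) * ‖z - 1‖ := by
            gcongr; exact norm_sub_le _ _
        _ = 2 * ‖z - 1‖ := by rw [norm_pow, hnorm, one_pow, norm_one]; ring
  -- partial sums converge to some limit
  have hshift : ∀ n : ℕ, ∑ i ∈ Finset.range n, ((i : ℝ) + 1)⁻¹ • z ^ (i + 1) = A (n + 1) := by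
    intro n
    show _ = ∑ k ∈ Finset.range (n+1), z ^ k / (k:ℂ)
    rw [Finset.sum_range_succ']
    simp only [Nat.cast_add, Nat.cast_one, pow_zero, Nat.cast_zero, div_zero, add_zero]
    refine Finset.sum_congr rfl fun i _ => ?_
    rw [Complex.real_smul]
    push_cast
    rw [div_eq_inv_mul]
  obtain ⟨L, hL⟩ := cauchySeq_tendsto_of_complete hcauchy
  rw [funext hshift] at hL
  have hLA : Tendsto A atTop (𝓝 L) := (tendsto_add_atTop_iff_nat 1).mp hL
  -- identify the limit via Abel's theorem
  have habel := Complex.tendsto_tsum_powerSeries_nhdsWithin_lt (f := fun n : ℕ => z ^ n / n) hLA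
  have hcont : Tendsto (fun w : ℂ => -Complex.log (1 - w * z)) ((𝓝[<] (1:ℝ)).map Complex.ofReal)
      (𝓝 (-Complex.log (1 - z))) := by
    have h1 : ContinuousAt (fun w : ℂ => -Complex.log (1 - w * z)) 1 := by
      refine ContinuousAt.neg (ContinuousAt.clog (by fun_prop) ?_)
      simpa using hslit
    have h2 : Tendsto Complex.ofReal (𝓝[<] (1:ℝ)) (𝓝 (1:ℂ)) := by
      have := (Complex.continuous_ofReal.tendsto (1:ℝ)).mono_left (nhdsWithin_le_nhds (s := Set.Iio 1))
      simpa using this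
    rw [Filter.tendsto_map'_iff]
    have := h1.tendsto.comp h2
    simpa using this
  have heq : (fun w : ℂ => ∑' n : ℕ, (z ^ n / n) * w ^ n) =ᶠ[(𝓝[<] (1:ℝ)).map Complex.ofReal]
      (fun w : ℂ => -Complex.log (1 - w * z)) := by
    rw [Filter.eventuallyEq_iff_exists_mem]
    refine ⟨Complex.ofReal '' Set.Ioo (-1) 1, ?_, ?_⟩
    · exact Filter.image_mem_map (Ioo_mem_nhdsLT_of_mem (by norm_num))
    · rintro w ⟨x, hx, rfl⟩
      have hxz : ‖(x : ℂ) * z‖ < 1 := by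
        rw [norm_mul, hnorm, mul_one, Complex.norm_real, Real.norm_eq_abs, abs_lt]
        exact ⟨hx.1, hx.2⟩
      have h5 := (Complex.hasSum_taylorSeries_neg_log hxz).tsum_eq
      show ∑' n : ℕ, z ^ n / (n:ℂ) * (x:ℂ) ^ n = -Complex.log (1 - (x:ℂ) * z)
      rw [← h5]
      apply tsum_congr
      intro n
      rw [mul_pow]; ring
  have habel' : Tendsto (fun w : ℂ => -Complex.log (1 - w * z)) ((𝓝[<] (1:ℝ)).map Complex.ofReal)
      (𝓝 L) := habel.congr' heq
  have : L = -Complex.log (1 - z) := tendsto_nhds_unique habel' hcont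
  rwa [this] at hLA

noncomputable def auxA (z : ℂ) (N : ℕ) : ℂ := ∑ k ∈ Finset.range N, z ^ k / k

noncomputable def auxG (z : ℂ) (N : ℕ) : ℂ :=
  ∑ l ∈ Finset.range (N + 1),
    if l = 1 then 0 else (1 / ((l : ℂ) - 1) + 1 / ((l : ℂ) + 3)) * z ^ (l + 1)

lemma auxG_id (z : ℂ) (hz : z ≠ 0) (N : ℕ) (hN : 1 ≤ N) :
    auxG z N = -z + z ^ 2 * auxA z N
      + (z ^ 2)⁻¹ * (auxA z (N + 4) - z - z ^ 2 / 2) - z ^ 2 / 4 := by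
  have hz2 : z ^ 2 ≠ 0 := pow_ne_zero _ hz
  induction N, hN using Nat.le_induction with
  | base =>
    simp only [auxG, auxA]
    norm_num [Finset.sum_range_succ]
    field_simp
    ring
  | succ n hn ih =>
    have hG : auxG z (n + 1) = auxG z n
        + (1 / ((n : ℂ) + 1 - 1) + 1 / ((n : ℂ) + 1 + 3)) * z ^ (n + 2) := by
      rw [auxG, auxG, Finset.sum_range_succ]
      have : n + 1 ≠ 1 := by omega
      rw [if_neg this]
      congr 1
      push_cast
      ring_nf
    have hA1 : auxA z (n + 1) = auxA z n + z ^ n / n := by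
      rw [auxA, auxA, Finset.sum_range_succ]
    have hA2 : auxA z (n + 1 + 4) = auxA z (n + 4) + z ^ (n + 4) / (n + 4) := by
      rw [auxA, auxA, show n + 1 + 4 = (n + 4) + 1 by ring, Finset.sum_range_succ]
      push_cast
      ring_nf
    rw [hG, ih, hA1, hA2]
    have hn0 : (n : ℂ) ≠ 0 := Nat.cast_ne_zero.mpr (by omega)
    have hn4 : (n : ℂ) + 4 ≠ 0 := by
      have : ((n + 4 : ℕ) : ℂ) ≠ 0 := Nat.cast_ne_zero.mpr (by omega)
      push_cast at this
      exact this
    have hpow : z ^ (n + 4) = z ^ n * z ^ 2 * z ^ 2 := by ring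
    have hpow2 : z ^ (n + 2) = z ^ n * z ^ 2 := by ring
    have key : (1 / ((n : ℂ) + 1 - 1) + 1 / ((n : ℂ) + 1 + 3)) * z ^ (n + 2)
        = z ^ 2 * (z ^ n / n) + (z ^ 2)⁻¹ * (z ^ (n + 4) / ((n : ℂ) + 4)) := by
      rw [hpow, hpow2]
      have : (n : ℂ) + 1 - 1 = (n : ℂ) := by ring
      rw [this]
      have : (n : ℂ) + 1 + 3 = (n : ℂ) + 4 := by ring
      rw [this]
      field_simp
    linear_combination key

lemma aux_arg {θ : ℝ} (hθ0 : 0 < θ) (hθπ : θ < Real.pi) :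
    (Complex.log (1 - Complex.exp (θ * Complex.I))).im = (θ - Real.pi) / 2 := by
  have hs2 : 0 < Real.sin (θ / 2) :=
    Real.sin_pos_of_pos_of_lt_pi (by linarith) (by linarith [Real.pi_pos])
  have hfact : 1 - Complex.exp (θ * Complex.I)
      = ((2 * Real.sin (θ / 2) : ℝ) : ℂ)
        * (Real.cos ((θ - Real.pi) / 2) + Real.sin ((θ - Real.pi) / 2) * Complex.I) := by
    have hcos : Real.cos ((θ - Real.pi) / 2) = Real.sin (θ / 2) := by
      rw [show (θ - Real.pi) / 2 = θ / 2 - Real.pi / 2 by ring, Real.cos_sub]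
      simp
    have hsin : Real.sin ((θ - Real.pi) / 2) = -Real.cos (θ / 2) := by
      rw [show (θ - Real.pi) / 2 = θ / 2 - Real.pi / 2 by ring, Real.sin_sub]
      simp
    apply Complex.ext
    · simp only [Complex.sub_re, Complex.one_re, Complex.exp_ofReal_mul_I_re, hcos,
        Complex.re_ofReal_mul, Complex.add_re, Complex.ofReal_re, Complex.mul_re,
        Complex.I_re, Complex.ofReal_im, Complex.I_im, Complex.mul_im]
      have h1 := Real.sin_sq_eq_half_sub (θ / 2)
      rw [show 2 * (θ/2) = θ by ring] at h1
      nlinarith [h1]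
    · simp only [Complex.sub_im, Complex.one_im, Complex.exp_ofReal_mul_I_im, hsin,
        Complex.im_ofReal_mul, Complex.add_im, Complex.ofReal_im, Complex.mul_im,
        Complex.I_im, Complex.ofReal_re, Complex.I_re, Complex.mul_re]
      have := Real.sin_two_mul (θ / 2)
      rw [show 2 * (θ/2) = θ by ring] at this
      nlinarith
  rw [Complex.log_im, hfact]
  have h2 : ((2 * Real.sin (θ / 2) : ℝ) : ℂ) * (↑(Real.cos ((θ - Real.pi) / 2))
      + ↑(Real.sin ((θ - Real.pi) / 2)) * Complex.I)
      = (2 * Real.sin (θ / 2) : ℝ) * (Complex.cos ((θ - Real.pi) / 2)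
      + Complex.sin ((θ - Real.pi) / 2) * Complex.I) := by
    push_cast [Complex.ofReal_cos, Complex.ofReal_sin]
    ring
  rw [h2, Complex.arg_real_mul _ (by positivity)]
  rw [show ((θ : ℂ) - (Real.pi : ℂ)) / 2 = (((θ - Real.pi) / 2 : ℝ) : ℂ) by push_cast; ring]
  exact Complex.arg_cos_add_sin_mul_I ⟨by linarith [Real.pi_pos], by linarith [Real.pi_pos]⟩

open Filter in
/-- For `θ ∈ (0,π)`, `t = cos θ`, the partial sums
`∑_{l=0, l≠1}^N (l+1)/(3 - l(l+2)) sin((l+1)θ)/sin θ` converge, as `N → ∞`, to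
`(π - θ)(1 - 2t²)/(2√(1 - t²)) + t/4`. -/
theorem stmt_13 (θ : ℝ) (hθ : θ ∈ Set.Ioo 0 Real.pi) (t : ℝ) (ht : t = Real.cos θ) :
    Tendsto (fun N : ℕ => ∑ l ∈ Finset.range (N + 1),
        if l = 1 then 0 else
          ((l : ℝ) + 1) / (3 - (l : ℝ) * ((l : ℝ) + 2)) *
            (Real.sin (((l : ℝ) + 1) * θ) / Real.sin θ))
      atTop
      (nhds ((Real.pi - θ) * (1 - 2 * t ^ 2) / (2 * Real.sqrt (1 - t ^ 2)) + t / 4)) := by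
  obtain ⟨hθ0, hθπ⟩ := hθ
  have hs : 0 < Real.sin θ := Real.sin_pos_of_pos_of_lt_pi hθ0 hθπ
  set z : ℂ := Complex.exp (θ * Complex.I) with hzdef
  have hznorm : ‖z‖ = 1 := by
    rw [hzdef, Complex.norm_exp_ofReal_mul_I]
  have hz0 : z ≠ 0 := Complex.exp_ne_zero _
  have hzim : z.im = Real.sin θ := Complex.exp_ofReal_mul_I_im θ
  have hzre : z.re = Real.cos θ := Complex.exp_ofReal_mul_I_re θ
  have hz1 : z ≠ 1 := by
    intro h
    rw [h] at hzim
    simp only [Complex.one_im] at hzim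
    linarith
  have hslit : (1 - z) ∈ Complex.slitPlane := by
    rw [Complex.mem_slitPlane_iff]
    right
    rw [Complex.sub_im, Complex.one_im, hzim]
    intro h
    linarith
  have hlog : Tendsto (auxA z) atTop (𝓝 (-Complex.log (1 - z))) := aux_log hznorm hz1 hslit
  set L : ℂ := -Complex.log (1 - z) with hLdef
  set T : ℂ := -z + z ^ 2 * L + (z ^ 2)⁻¹ * (L - z - z ^ 2 / 2) - z ^ 2 / 4 with hTdef
  have h4 : Tendsto (fun N => auxA z (N + 4)) atTop (𝓝 L) :=
    (tendsto_add_atTop_iff_nat 4).mpr hlog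
  have hcomb : Tendsto (fun N : ℕ => -z + z ^ 2 * auxA z N
      + (z ^ 2)⁻¹ * (auxA z (N + 4) - z - z ^ 2 / 2) - z ^ 2 / 4) atTop (𝓝 T) := by
    apply Tendsto.sub_const
    apply Tendsto.add
    · exact tendsto_const_nhds.add (hlog.const_mul _)
    · exact ((h4.sub_const z).sub_const _).const_mul _
  have hGtend : Tendsto (auxG z) atTop (𝓝 T) := by
    apply hcomb.congr'
    filter_upwards [eventually_ge_atTop 1] with N hN
    exact (auxG_id z hz0 N hN).symm
  have him : Tendsto (fun N => -(1 / (2 * Real.sin θ)) * (auxG z N).im) atTop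
      (𝓝 (-(1 / (2 * Real.sin θ)) * T.im)) :=
    ((Complex.continuous_im.tendsto T).comp hGtend).const_mul _
  have hfun : ∀ N : ℕ, (∑ l ∈ Finset.range (N + 1), if l = 1 then 0 else
      ((l : ℝ) + 1) / (3 - (l : ℝ) * ((l : ℝ) + 2)) * (Real.sin (((l : ℝ) + 1) * θ) / Real.sin θ))
      = -(1 / (2 * Real.sin θ)) * (auxG z N).im := by
    intro N
    rw [auxG, Complex.im_sum, Finset.mul_sum]
    apply Finset.sum_congr rfl
    intro l _
    by_cases hl : l = 1
    · simp [hl]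
    · rw [if_neg hl, if_neg hl]
      have hcoe : (1 / ((l : ℂ) - 1) + 1 / ((l : ℂ) + 3))
          = (((1 / ((l : ℝ) - 1) + 1 / ((l : ℝ) + 3)) : ℝ) : ℂ) := by push_cast; ring
      have hzp : (z ^ (l + 1)).im = Real.sin (((l : ℝ) + 1) * θ) := by
        rw [hzdef, ← Complex.exp_nat_mul,
          show ((l + 1 : ℕ) : ℂ) * ((θ : ℂ) * Complex.I)
            = ((((l : ℝ) + 1) * θ : ℝ) : ℂ) * Complex.I by push_cast; ring,
          Complex.exp_ofReal_mul_I_im]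
      rw [hcoe, Complex.im_ofReal_mul, hzp]
      have hl1 : (l : ℝ) - 1 ≠ 0 := by
        intro h
        apply hl
        have : (l : ℝ) = 1 := by linarith
        exact_mod_cast this
      have hl3 : (l : ℝ) + 3 ≠ 0 := by positivity
      have hden : 3 - (l : ℝ) * ((l : ℝ) + 2) ≠ 0 := by
        intro h
        have h2 : ((l : ℝ) - 1) * ((l : ℝ) + 3) = 0 := by linear_combination -h
        rcases mul_eq_zero.mp h2 with h3 | h3
        · exact hl1 h3
        · exact hl3 h3
      field_simp
      ring
  rw [show (fun N : ℕ => ∑ l ∈ Finset.range (N + 1), if l = 1 then 0 else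
      ((l : ℝ) + 1) / (3 - (l : ℝ) * ((l : ℝ) + 2)) * (Real.sin (((l : ℝ) + 1) * θ) / Real.sin θ))
      = fun N => -(1 / (2 * Real.sin θ)) * (auxG z N).im from funext hfun]
  convert him using 2
  -- value computation
  have hsqrt : Real.sqrt (1 - t ^ 2) = Real.sin θ := by
    rw [ht, show 1 - Real.cos θ ^ 2 = Real.sin θ ^ 2 by
      nlinarith [Real.sin_sq_add_cos_sq θ], Real.sqrt_sq hs.le]
  have harg : (Complex.log (1 - z)).im = (θ - Real.pi) / 2 := aux_arg hθ0 hθπ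
  have hLim : L.im = (Real.pi - θ) / 2 := by
    rw [hLdef, Complex.neg_im, harg]; ring
  have hz2 : z ^ 2 = Complex.exp ((2 * θ : ℝ) * Complex.I) := by
    rw [show (((2 * θ : ℝ) : ℂ)) * Complex.I = ((2 : ℕ) : ℂ) * ((θ : ℂ) * Complex.I)
      by push_cast; ring, Complex.exp_nat_mul, hzdef]
  have hT' : T = -z + z ^ 2 * L + (z ^ 2)⁻¹ * L - (z ^ 2)⁻¹ * z
      - ((1 / 2 : ℝ) : ℂ) - ((1 / 4 : ℝ) : ℂ) * z ^ 2 := by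
    rw [hTdef]
    have hz2ne : z ^ 2 ≠ 0 := pow_ne_zero _ hz0
    field_simp
    push_cast
    ring
  have hz2im : (z ^ 2).im = Real.sin (2 * θ) := by rw [hz2, Complex.exp_ofReal_mul_I_im]
  have hz2re : (z ^ 2).re = Real.cos (2 * θ) := by rw [hz2, Complex.exp_ofReal_mul_I_re]
  have hz2invim : ((z ^ 2)⁻¹).im = -Real.sin (2 * θ) := by
    rw [hz2, ← Complex.exp_neg, show -(((2 * θ : ℝ) : ℂ) * Complex.I)
      = ((-(2 * θ) : ℝ) : ℂ) * Complex.I by push_cast; ring,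
      Complex.exp_ofReal_mul_I_im, Real.sin_neg]
  have hz2invre : ((z ^ 2)⁻¹).re = Real.cos (2 * θ) := by
    rw [hz2, ← Complex.exp_neg, show -(((2 * θ : ℝ) : ℂ) * Complex.I)
      = ((-(2 * θ) : ℝ) : ℂ) * Complex.I by push_cast; ring,
      Complex.exp_ofReal_mul_I_re, Real.cos_neg]
  have hTim : T.im = -Real.sin θ + (Real.cos (2 * θ) * L.im + Real.sin (2 * θ) * L.re)
      + (Real.cos (2 * θ) * L.im + (-Real.sin (2 * θ)) * L.re)
      - (Real.cos (2 * θ) * Real.sin θ + (-Real.sin (2 * θ)) * Real.cos θ)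
      - 0 - (1 / 4) * Real.sin (2 * θ) := by
    rw [hT']
    simp only [Complex.sub_im, Complex.add_im, Complex.neg_im, Complex.mul_im,
      hz2im, hz2re, hz2invim, hz2invre, hzim, hzre, Complex.ofReal_im, Complex.ofReal_re,
      Complex.im_ofReal_mul]
    ring
  rw [hsqrt, ht, hTim, hLim, Real.sin_two_mul, Real.cos_two_mul]
  field_simp
  ring
end

section
/- For every θ ∈ (0,π) with t = cos θ, the partial sums ∑_{l=0, l≠2}^{N} (l+1)/(8 - l(l+2)) · sin((l+1)θ)/sin θ converge as N → ∞ to (π − θ)·t(3 − 4t²)/(2√(1 − t²)) − (1 − 4t²)/12. -/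
open Filter Finset Complex

set_option maxHeartbeats 4000000

open Filter in
/-- For `θ ∈ (0,π)`, `t = cos θ`, the partial sums
`∑_{l=0, l≠2}^N (l+1)/(8 - l(l+2)) sin((l+1)θ)/sin θ` converge, as `N → ∞`, to
`(π - θ)·t(3 - 4t²)/(2√(1 - t²)) - (1 - 4t²)/12`. -/
theorem stmt_14 (θ : ℝ) (hθ : θ ∈ Set.Ioo 0 Real.pi) (t : ℝ) (ht : t = Real.cos θ) :
    Tendsto (fun N : ℕ => ∑ l ∈ Finset.range (N + 1),
        if l = 2 then 0 else
          ((l : ℝ) + 1) / (8 - (l : ℝ) * ((l : ℝ) + 2)) *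
            (Real.sin (((l : ℝ) + 1) * θ) / Real.sin θ))
      atTop
      (nhds ((Real.pi - θ) * (t * (3 - 4 * t ^ 2)) / (2 * Real.sqrt (1 - t ^ 2))
        - (1 - 4 * t ^ 2) / 12)) := by
  obtain ⟨hθ0, hθπ⟩ := hθ
  have hsin : 0 < Real.sin θ := Real.sin_pos_of_pos_of_lt_pi hθ0 hθπ
  have hpyth := Real.sin_sq_add_cos_sq θ
  have hcos1 : Real.cos θ < 1 := by
    nlinarith [Real.cos_le_one θ, mul_pos hsin hsin]
  set z : ℂ := Complex.exp (θ * I) with hzdef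
  have hz0 : z ≠ 0 := Complex.exp_ne_zero _
  have hzim : z.im = Real.sin θ := by rw [hzdef, Complex.exp_ofReal_mul_I_im]
  have hzre : z.re = Real.cos θ := by rw [hzdef, Complex.exp_ofReal_mul_I_re]
  have hz1 : z ≠ 1 := by
    intro h
    rw [h] at hzim
    simp at hzim
    linarith
  have hznorm : ‖z‖ = 1 := by
    rw [hzdef, Complex.norm_exp]
    simp
  have hzpow : ∀ m : ℕ, z ^ m = Complex.exp (((m : ℝ) * θ : ℝ) * I) := by
    intro m
    rw [hzdef, ← Complex.exp_nat_mul]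
    push_cast
    ring_nf
  have hzpow_im : ∀ m : ℕ, (z ^ m).im = Real.sin (m * θ) := by
    intro m; rw [hzpow m, Complex.exp_ofReal_mul_I_im]
  have hzinv : z⁻¹ = Complex.exp ((-θ : ℝ) * I) := by
    rw [hzdef, ← Complex.exp_neg]
    push_cast
    ring_nf
  have hzinvpow : ∀ m : ℕ, (z⁻¹) ^ m = Complex.exp (((m : ℝ) * (-θ) : ℝ) * I) := by
    intro m
    rw [hzinv, ← Complex.exp_nat_mul]
    push_cast
    ring_nf
  set w : ℕ → ℂ := fun k => z ^ k / k with hwdef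
  set P : ℕ → ℂ := fun K => ∑ k ∈ range K, w k with hPdef
  set ρ : ℕ → ℝ := fun m => if m = 3 then 0 else (m : ℝ) / (9 - (m : ℝ) ^ 2) with hρdef
  set c : ℕ → ℂ := fun m => ((ρ m : ℝ) : ℂ) * z ^ m with hcdef
  have hw0 : w 0 = 0 := by simp [hwdef]
  -- Step 1: the partial sums `P` converge to some limit `L`
  have hgeom : ∀ n : ℕ, ‖∑ i ∈ range n, z ^ (i + 1)‖ ≤ 2 / ‖z - 1‖ := by
    intro n
    have hz1' : z - 1 ≠ 0 := sub_ne_zero.mpr hz1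
    have hpos : 0 < ‖z - 1‖ := norm_pos_iff.mpr hz1'
    have he : ∑ i ∈ range n, z ^ (i + 1) = z * ((z ^ n - 1) / (z - 1)) := by
      rw [← geom_sum_eq hz1, Finset.mul_sum]
      exact Finset.sum_congr rfl fun i _ => by ring
    rw [he, norm_mul, hznorm, one_mul, norm_div]
    have h2 : ‖z ^ n - 1‖ ≤ 2 := by
      calc ‖z ^ n - 1‖ ≤ ‖z ^ n‖ + ‖(1 : ℂ)‖ := norm_sub_le _ _
        _ = 2 := by rw [norm_pow, hznorm]; norm_num
    gcongr
  have hanti : Antitone (fun n : ℕ => ((n : ℝ) + 1)⁻¹) := fun a b hab => by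
    have h : (a : ℝ) + 1 ≤ (b : ℝ) + 1 := by exact_mod_cast Nat.succ_le_succ hab
    exact inv_anti₀ (by positivity) h
  have htend0 : Tendsto (fun n : ℕ => ((n : ℝ) + 1)⁻¹) atTop (nhds 0) := by
    simpa [one_div] using tendsto_one_div_add_atTop_nhds_zero_nat (𝕜 := ℝ)
  have hD : CauchySeq (fun n => ∑ i ∈ range n, (((i : ℝ) + 1)⁻¹) • z ^ (i + 1)) :=
    hanti.cauchySeq_series_mul_of_tendsto_zero_of_bounded htend0 hgeom
  have hPs : (fun n => ∑ i ∈ range n, (((i : ℝ) + 1)⁻¹) • z ^ (i + 1)) =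
      fun n => P (n + 1) := by
    funext n
    rw [hPdef]
    simp only
    rw [Finset.sum_range_succ', hw0, add_zero]
    refine Finset.sum_congr rfl fun i _ => ?_
    rw [hwdef]
    simp only [Complex.real_smul]
    push_cast
    rw [div_eq_inv_mul]
  rw [hPs] at hD
  have hcsP : CauchySeq P := (cauchySeq_shift 1).mp hD
  obtain ⟨L, hL⟩ := cauchySeq_tendsto_of_complete hcsP
  -- Step 2: identify the limit via Abel's theorem
  have hre1z : 0 < (1 - z).re := by
    simp only [Complex.sub_re, Complex.one_re, hzre]
    linarith
  have hAbel : Tendsto (fun x : ℝ => ∑' n, w n * (x : ℂ) ^ n)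
      (nhdsWithin 1 (Set.Iio 1)) (nhds L) := by
    have h := Complex.tendsto_tsum_powerSeries_nhdsWithin_lt hL
    rwa [tendsto_map'_iff] at h
  have hEq : ∀ᶠ x : ℝ in nhdsWithin 1 (Set.Iio 1),
      (∑' n, w n * (x : ℂ) ^ n) = -Complex.log (1 - x * z) := by
    filter_upwards [Ioo_mem_nhdsLT_of_mem (by norm_num : (1 : ℝ) ∈ Set.Ioc 0 1)] with x hx
    have hxz : ‖(x : ℂ) * z‖ < 1 := by
      rw [norm_mul, hznorm, mul_one, Complex.norm_real, Real.norm_eq_abs]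
      rw [abs_lt]
      exact ⟨by linarith [hx.1], hx.2⟩
    have hs := Complex.hasSum_taylorSeries_neg_log (z := (x : ℂ) * z) hxz
    have heq2 : (fun n : ℕ => ((x : ℂ) * z) ^ n / n) = fun n => w n * (x : ℂ) ^ n := by
      funext n
      rw [hwdef]
      simp only [mul_pow]
      ring
    rw [heq2] at hs
    exact hs.tsum_eq
  have hlog : Tendsto (fun x : ℝ => -Complex.log (1 - x * z))
      (nhdsWithin 1 (Set.Iio 1)) (nhds (-Complex.log (1 - z))) := by
    have hcont : ContinuousAt (fun x : ℝ => -Complex.log (1 - (x : ℂ) * z)) 1 := by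
      apply ContinuousAt.neg
      apply ContinuousAt.clog
      · fun_prop
      · simp only [Complex.ofReal_one, one_mul]
        exact Or.inl hre1z
    have h := hcont.tendsto.mono_left (nhdsWithin_le_nhds (s := Set.Iio 1))
    simpa using h
  have hLeq : L = -Complex.log (1 - z) :=
    tendsto_nhds_unique hAbel (hlog.congr' (hEq.mono fun x h => h.symm))
  rw [hLeq] at hL
  -- Step 3: the shifted decomposition
  set B : ℂ := -z ^ 3 / 2 with hBdef
  set C : ℂ := -(z⁻¹) ^ 3 / 2 with hCdef
  set A : ℂ := (∑ m ∈ range 7, c m) - B * P 4 - C * P 10 with hAdef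
  have hkey : ∀ M : ℕ, c (M + 7) = B * w (M + 4) + C * w (M + 10) := by
    intro M
    rw [hcdef, hwdef, hρdef]
    simp only
    rw [if_neg (by omega : ¬ M + 7 = 3)]
    have h3 : (9 : ℝ) - ((M + 7 : ℕ) : ℝ) ^ 2 ≠ 0 := by
      push_cast
      nlinarith [Nat.cast_nonneg (α := ℝ) M]
    have h4 : ((M + 4 : ℕ) : ℂ) ≠ 0 := Nat.cast_ne_zero.mpr (by omega)
    have h5 : ((M + 10 : ℕ) : ℂ) ≠ 0 := Nat.cast_ne_zero.mpr (by omega)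
    have h3' : ((9 : ℂ) - ((M + 7 : ℕ) : ℂ) ^ 2) ≠ 0 := by
      intro h
      apply h3
      exact_mod_cast congrArg Complex.re h
    rw [hBdef, hCdef]
    push_cast at h3' h4 h5 ⊢
    field_simp [hz0, h3', h4, h5]
    ring
  have hind : ∀ M : ℕ, ∑ m ∈ range (M + 7), c m = A + B * P (M + 4) + C * P (M + 10) := by
    intro M
    induction M with
    | zero => rw [hAdef]; ring
    | succ M ih =>
      have e7 : M + 1 + 7 = (M + 7) + 1 := by omega
      have e4 : M + 1 + 4 = (M + 4) + 1 := by omega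
      have e10 : M + 1 + 10 = (M + 10) + 1 := by omega
      rw [e7, e4, e10, Finset.sum_range_succ, ih, hkey M]
      have p4 : P (M + 4 + 1) = P (M + 4) + w (M + 4) := by
        rw [hPdef]; exact Finset.sum_range_succ w (M + 4)
      have p10 : P (M + 10 + 1) = P (M + 10) + w (M + 10) := by
        rw [hPdef]; exact Finset.sum_range_succ w (M + 10)
      rw [p4, p10]
      ring
  set T : ℂ := A + (B + C) * (-Complex.log (1 - z)) with hTdef
  have hTC : Tendsto (fun M : ℕ => ∑ m ∈ range M, c m) atTop (nhds T) := by
    rw [← Filter.tendsto_add_atTop_iff_nat 7]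
    have h4 : Tendsto (fun M : ℕ => P (M + 4)) atTop (nhds (-Complex.log (1 - z))) :=
      hL.comp (tendsto_add_atTop_nat 4)
    have h10 : Tendsto (fun M : ℕ => P (M + 10)) atTop (nhds (-Complex.log (1 - z))) :=
      hL.comp (tendsto_add_atTop_nat 10)
    have hlim : Tendsto (fun M : ℕ => A + B * P (M + 4) + C * P (M + 10)) atTop
        (nhds (A + B * (-Complex.log (1 - z)) + C * (-Complex.log (1 - z)))) :=
      ((tendsto_const_nhds.add (h4.const_mul B)).add (h10.const_mul C))
    have : T = A + B * (-Complex.log (1 - z)) + C * (-Complex.log (1 - z)) := by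
      rw [hTdef]; ring
    rw [this]
    exact hlim.congr fun M => (hind M).symm
  -- Step 4: back to the real series
  have hreal : (fun N : ℕ => ∑ l ∈ Finset.range (N + 1),
      if l = 2 then 0 else
        ((l : ℝ) + 1) / (8 - (l : ℝ) * ((l : ℝ) + 2)) *
          (Real.sin (((l : ℝ) + 1) * θ) / Real.sin θ)) =
      fun N => (∑ m ∈ range (N + 2), c m).im / Real.sin θ := by
    funext N
    rw [Complex.im_sum]
    conv_rhs => rw [Finset.sum_range_succ']
    have hc0 : (c 0).im = 0 := by simp [hcdef, hρdef]
    rw [hc0, add_zero, Finset.sum_div]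
    refine Finset.sum_congr rfl fun l _ => ?_
    by_cases hl : l = 2
    · subst hl
      simp [hcdef, hρdef]
    · rw [if_neg hl]
      have hl3 : ¬ l + 1 = 3 := by omega
      rw [hcdef]
      simp only
      rw [im_ofReal_mul, hzpow_im, hρdef]
      simp only [if_neg hl3]
      push_cast
      have h9 : (9 : ℝ) - ((l : ℝ) + 1) ^ 2 = 8 - (l : ℝ) * ((l : ℝ) + 2) := by ring
      rw [h9]
      ring
  rw [hreal]
  have hTim : Tendsto (fun N : ℕ => (∑ m ∈ range (N + 2), c m).im / Real.sin θ) atTop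
      (nhds (T.im / Real.sin θ)) :=
    ((Complex.continuous_im.tendsto T).comp (hTC.comp (tendsto_add_atTop_nat 2))).div_const _
  -- Step 5: compute the limit value
  suffices hval : (Real.pi - θ) * (t * (3 - 4 * t ^ 2)) / (2 * Real.sqrt (1 - t ^ 2))
      - (1 - 4 * t ^ 2) / 12 = T.im / Real.sin θ by
    rw [hval]; exact hTim
  -- explicit forms of powers of z
  have hzk : ∀ m : ℕ, z ^ m = ((Real.cos (m * θ) : ℝ) : ℂ) + ((Real.sin (m * θ) : ℝ) : ℂ) * I :=
    fun m => by rw [hzpow m, Complex.exp_mul_I, ← Complex.ofReal_cos, ← Complex.ofReal_sin]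
  have hzk' : ∀ m : ℕ, (z⁻¹) ^ m = ((Real.cos (m * θ) : ℝ) : ℂ) - ((Real.sin (m * θ) : ℝ) : ℂ) * I :=
    fun m => by
      rw [hzinvpow m, Complex.exp_mul_I, ← Complex.ofReal_cos, ← Complex.ofReal_sin,
        show (m : ℝ) * -θ = -(m * θ) by ring, Real.cos_neg, Real.sin_neg]
      push_cast
      ring
  have hzeq : z = ((Real.cos θ : ℝ) : ℂ) + ((Real.sin θ : ℝ) : ℂ) * I := by
    have := hzk 1
    rw [pow_one] at this
    simpa using this
  have hzeq' : z⁻¹ = ((Real.cos θ : ℝ) : ℂ) - ((Real.sin θ : ℝ) : ℂ) * I := by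
    have := hzk' 1
    rw [pow_one] at this
    simpa using this
  have e2 : z ^ 2 = ((Real.cos (2*θ) : ℝ) : ℂ) + ((Real.sin (2*θ) : ℝ) : ℂ) * I := by
    rw [show (2:ℝ)*θ = ((2:ℕ):ℝ)*θ by norm_num]; exact hzk 2
  have e2' : (z⁻¹) ^ 2 = ((Real.cos (2*θ) : ℝ) : ℂ) - ((Real.sin (2*θ) : ℝ) : ℂ) * I := by
    rw [show (2:ℝ)*θ = ((2:ℕ):ℝ)*θ by norm_num]; exact hzk' 2
  have e3 : z ^ 3 = ((Real.cos (3*θ) : ℝ) : ℂ) + ((Real.sin (3*θ) : ℝ) : ℂ) * I := by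
    rw [show (3:ℝ)*θ = ((3:ℕ):ℝ)*θ by norm_num]; exact hzk 3
  have e3' : (z⁻¹) ^ 3 = ((Real.cos (3*θ) : ℝ) : ℂ) - ((Real.sin (3*θ) : ℝ) : ℂ) * I := by
    rw [show (3:ℝ)*θ = ((3:ℕ):ℝ)*θ by norm_num]; exact hzk' 3
  clear_value z w P ρ c B C A T
  clear hzdef hzpow hzinv hzinvpow hL hTC hAbel hEq hlog
  -- closed form for A
  have hAcl : A = ((1/2 : ℝ) : ℂ) * (z ^ 2 + (z⁻¹) ^ 2) + ((1/4 : ℝ) : ℂ) * (z + z⁻¹)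
      + ((1/6 : ℝ) : ℂ) + ((1/12 : ℝ) : ℂ) * z ^ 3 := by
    rw [hAdef, hBdef, hCdef, hPdef, hcdef, hρdef, inv_eq_one_div]
    simp only [Finset.sum_range_succ, Finset.sum_range_zero, hwdef]
    norm_num
    push_cast
    field_simp [hz0]
    have hu : z * z⁻¹ = 1 := mul_inv_cancel₀ hz0
    linear_combination ((0 : ℂ) * (z * 175575859200 + z ^ 2 * 87787929600 + z ^ 3 * 58525286400 +
      z ^ 4 * 87787929600 + z ^ 5 * 175575859200 + z ^ 6 * 29262643200) *
      ((z * z⁻¹) ^ 2 + z * z⁻¹ + 1)) * hu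
  have hAim : A.im = Real.sin (3 * θ) / 12 := by
    rw [hAcl, e2, e2', e3, hzeq', hzeq]
    simp only [Complex.add_im, Complex.sub_im, Complex.sub_re, Complex.add_re, Complex.mul_im,
      Complex.mul_re, Complex.ofReal_re, Complex.ofReal_im, Complex.I_re, Complex.I_im]
    ring
  have hBC : B + C = ((-Real.cos (3 * θ) : ℝ) : ℂ) := by
    rw [hBdef, hCdef, e3, e3']
    push_cast
    ring
  have harg : (Complex.log (1 - z)).im = (θ - Real.pi) / 2 := by
    rw [Complex.log_im]
    have hhalf : 0 < Real.sin (θ / 2) :=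
      Real.sin_pos_of_pos_of_lt_pi (by linarith) (by linarith [Real.pi_pos])
    have f1 : Real.cos ((θ - Real.pi) / 2) = Real.sin (θ / 2) := by
      rw [show (θ - Real.pi) / 2 = -(Real.pi / 2 - θ / 2) by ring, Real.cos_neg,
        Real.cos_pi_div_two_sub]
    have f2 : Real.sin ((θ - Real.pi) / 2) = -Real.cos (θ / 2) := by
      rw [show (θ - Real.pi) / 2 = -(Real.pi / 2 - θ / 2) by ring, Real.sin_neg,
        Real.sin_pi_div_two_sub]
    have f3 : Real.cos θ = 1 - 2 * Real.sin (θ / 2) ^ 2 := by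
      have h := Real.cos_two_mul (θ / 2)
      rw [show 2 * (θ / 2) = θ by ring] at h
      linarith [Real.sin_sq_add_cos_sq (θ / 2)]
    have f4 : Real.sin θ = 2 * Real.sin (θ / 2) * Real.cos (θ / 2) := by
      have h := Real.sin_two_mul (θ / 2)
      rw [show 2 * (θ / 2) = θ by ring] at h
      linarith
    have hfac : 1 - z = ((2 * Real.sin (θ / 2) : ℝ) : ℂ) *
        (((Real.cos ((θ - Real.pi) / 2) : ℝ) : ℂ) + ((Real.sin ((θ - Real.pi) / 2) : ℝ) : ℂ) * I) := by
      rw [hzeq, f1, f2]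
      rw [Complex.ext_iff]
      constructor
      · simp only [Complex.sub_re, Complex.add_re, Complex.mul_re, Complex.ofReal_re,
          Complex.ofReal_im, Complex.I_re, Complex.I_im, Complex.one_re, Complex.ofReal_neg,
          Complex.neg_re, Complex.neg_im]
        linear_combination -f3
      · simp only [Complex.sub_im, Complex.add_im, Complex.mul_im, Complex.ofReal_re,
          Complex.ofReal_im, Complex.I_re, Complex.I_im, Complex.one_im, Complex.ofReal_neg,
          Complex.neg_re, Complex.neg_im]
        linear_combination -f4
    rw [hfac, Complex.arg_real_mul _ (by positivity), Complex.ofReal_cos, Complex.ofReal_sin,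
      Complex.arg_cos_add_sin_mul_I ⟨by linarith [Real.pi_pos], by linarith [Real.pi_pos]⟩]
  have hTim2 : T.im = Real.sin (3 * θ) / 12 + (-Real.cos (3 * θ)) * ((Real.pi - θ) / 2) := by
    rw [hTdef, Complex.add_im, hBC, im_ofReal_mul, Complex.neg_im, harg, hAim]
    ring
  have hsqrt : Real.sqrt (1 - t ^ 2) = Real.sin θ := by
    rw [ht, show 1 - Real.cos θ ^ 2 = Real.sin θ ^ 2 by linarith [hpyth], Real.sqrt_sq hsin.le]
  rw [hTim2, hsqrt, ht, Real.sin_three_mul, Real.cos_three_mul]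
  field_simp
  ring_nf
  nlinarith [hpyth, sq_nonneg (Real.sin θ), sq_nonneg (Real.cos θ)]
end

section
/- For every θ ∈ (0,π) with t = cos θ, the partial sums ∑_{l=0}^{N} (l+1)/(−3/4 − l(l+2)) · sin((l+1)θ)/sin θ converge as N → ∞ to (−1/(4√2)) · ((1 + t)/√(1 − t) + √(1 − t)) · π. -/
open Filter Finset Real
open scoped Topology

lemma sin_mul_sin_sub (a b : ℝ) : Real.sin (a+b) * Real.sin (a-b) = Real.sin a^2 - Real.sin b^2 := by
  rw [Real.sin_add, Real.sin_sub]
  nlinarith [Real.sin_sq_add_cos_sq a, Real.sin_sq_add_cos_sq b]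

lemma sum_sin_odd (x : ℝ) (n : ℕ) :
    (∑ k ∈ range n, Real.sin ((2*k+1)*x)) * Real.sin x = Real.sin (n*x)^2 := by
  induction n with
  | zero => simp
  | succ n ih =>
    have key := sin_mul_sin_sub (((n:ℝ)+1)*x) ((n:ℝ)*x)
    rw [show ((n:ℝ)+1)*x + (n:ℝ)*x = (2*(n:ℝ)+1)*x by ring,
        show ((n:ℝ)+1)*x - (n:ℝ)*x = x by ring] at key
    rw [Finset.sum_range_succ, add_mul, ih]
    push_cast
    linarith [key]

lemma conv_exists (x : ℝ) (hx0 : 0 < x) (hxpi : x < π) :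
    ∃ l, Tendsto (fun n => ∑ k ∈ range n, Real.sin ((2*k+1)*x) / (2*k+1)) atTop (𝓝 l) := by
  have hs : 0 < Real.sin x := Real.sin_pos_of_pos_of_lt_pi hx0 hxpi
  have hb : ∀ n : ℕ, ‖∑ k ∈ range n, Real.sin ((2*k+1)*x)‖ ≤ (Real.sin x)⁻¹ := by
    intro n
    have h := sum_sin_odd x n
    have : ∑ k ∈ range n, Real.sin ((2*k+1)*x) = Real.sin ((n:ℝ)*x)^2 / Real.sin x := by
      rw [eq_div_iff hs.ne']; exact h
    rw [this, Real.norm_eq_abs, abs_div, abs_of_pos hs, div_eq_mul_inv]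
    have h1 : |Real.sin ((n:ℝ)*x)^2| ≤ 1 := by
      rw [abs_of_nonneg (sq_nonneg _)]
      nlinarith [Real.neg_one_le_sin ((n:ℝ)*x), Real.sin_le_one ((n:ℝ)*x)]
    nth_rewrite 2 [← one_mul (Real.sin x)⁻¹]
    gcongr
  have hanti : Antitone (fun k : ℕ => (2*(k:ℝ)+1)⁻¹) := by
    intro a b hab
    have h1 : (a:ℝ) ≤ (b:ℝ) := Nat.cast_le.mpr hab
    have h2 : (0:ℝ) < 2*(a:ℝ)+1 := by positivity
    apply inv_anti₀ h2
    linarith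
  have h0 : Tendsto (fun k : ℕ => (2*(k:ℝ)+1)⁻¹) atTop (𝓝 0) := by
    apply Tendsto.inv_tendsto_atTop
    apply tendsto_atTop_add_const_right
    exact tendsto_natCast_atTop_atTop.const_mul_atTop zero_lt_two
  have hcauchy := hanti.cauchySeq_series_mul_of_tendsto_zero_of_bounded h0 hb
  obtain ⟨l, hl⟩ := cauchySeq_tendsto_of_complete hcauchy
  refine ⟨l, hl.congr fun n => Finset.sum_congr rfl fun k _ => ?_⟩
  rw [smul_eq_mul]; ring

lemma hasSum_logIm (x : ℝ) (r : ℝ) (hr : |r| < 1) :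
    HasSum (fun k : ℕ => Real.sin ((2*(k:ℝ)+1)*x) * r^(2*k+1) / (2*(k:ℝ)+1))
      (((Complex.log (1 + (r:ℂ) * Complex.exp ((x:ℂ) * Complex.I))
        - Complex.log (1 - (r:ℂ) * Complex.exp ((x:ℂ) * Complex.I))) / 2).im) := by
  set w : ℂ := Complex.exp ((x:ℂ) * Complex.I) with hw
  set z : ℂ := (r:ℂ) * w with hz
  have hnz : ‖z‖ < 1 := by
    rw [hz, norm_mul, Complex.norm_real, Real.norm_eq_abs, hw,
      Complex.norm_exp_ofReal_mul_I, mul_one]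
    exact hr
  have h1 := Complex.hasSum_taylorSeries_neg_log hnz
  have h2 := Complex.hasSum_taylorSeries_log hnz
  have h3 := h2.add h1
  have hinj : Function.Injective (fun k : ℕ => 2*k+1) := by
    intro a b h
    simp only [] at h
    omega
  have hvan : ∀ n ∉ Set.range (fun k : ℕ => 2*k+1),
      ((-1:ℂ)^(n+1) * z^n / n + z^n / n) = 0 := by
    intro n hn
    have hev : Even n := by
      rcases Nat.even_or_odd n with h | h
      · exact h
      · obtain ⟨m, hm⟩ := h
        exact absurd ⟨m, by simp only []; omega⟩ hn
    obtain ⟨m, hm⟩ := hev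
    have e : (-1:ℂ)^(n+1) = -1 := by
      rw [hm, show m + m + 1 = 2*m+1 by ring, pow_succ, pow_mul]
      norm_num
    rw [e]; ring
  have h4 := (hinj.hasSum_iff hvan).mpr h3
  have h6 := Complex.hasSum_im (h4.div_const 2)
  convert h6 using 1
  funext k
  simp only [Function.comp_apply]
  have e1 : (-1:ℂ)^(2*k+1+1) = 1 := by
      rw [show 2*k+1+1 = 2*(k+1) by ring, pow_mul]; norm_num
  rw [e1, one_mul]
  have e2 : (z^(2*k+1)/((2*k+1:ℕ):ℂ) + z^(2*k+1)/((2*k+1:ℕ):ℂ))/2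
      = z^(2*k+1)/(((2*(k:ℝ)+1):ℝ):ℂ) := by push_cast; ring
  rw [e2]
  have harg : ((2*k+1 : ℕ):ℂ) * ((x:ℂ) * Complex.I) = (((2*(k:ℝ)+1)*x : ℝ):ℂ) * Complex.I := by
      push_cast; ring
  have e3 : z^(2*k+1)
        = ((r^(2*k+1) : ℝ) : ℂ) * Complex.exp ((((2*(k:ℝ)+1)*x : ℝ):ℂ) * Complex.I) := by
    rw [hz, mul_pow, hw, ← Complex.exp_nat_mul, harg]
    push_cast; ring
  rw [e3, Complex.div_ofReal_im]
  simp only [Complex.mul_im, Complex.ofReal_re, Complex.ofReal_im,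
    Complex.exp_ofReal_mul_I_im, Complex.exp_ofReal_mul_I_re, zero_mul, add_zero]
  ring
  rw [sub_eq_add_neg]

lemma arg_exp_self (t : ℝ) (h : t ∈ Set.Ioc (-π) π) :
    Complex.arg (Complex.exp ((t:ℂ)*Complex.I)) = t := by
  rw [Complex.arg_exp_mul_I]
  apply (toIocMod_eq_self _).mpr
  refine ⟨h.1, by linarith [h.2]⟩

lemma ccos_pi_div_two : Complex.cos ((π:ℂ)/2) = 0 := by
  rw [show ((π:ℂ))/2 = ((π/2 : ℝ):ℂ) by push_cast; ring, ← Complex.ofReal_cos,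
    Real.cos_pi_div_two, Complex.ofReal_zero]

lemma csin_pi_div_two : Complex.sin ((π:ℂ)/2) = 1 := by
  rw [show ((π:ℂ))/2 = ((π/2 : ℝ):ℂ) by push_cast; ring, ← Complex.ofReal_sin,
    Real.sin_pi_div_two, Complex.ofReal_one]

lemma one_add_exp (x : ℝ) : (1:ℂ) + Complex.exp ((x:ℂ)*Complex.I)
    = ((2*Real.cos (x/2) : ℝ):ℂ) * Complex.exp (((x/2 : ℝ):ℂ)*Complex.I) := by
  have hcC := Complex.cos_two_mul ((x:ℂ)/2)
  have hsC := Complex.sin_two_mul ((x:ℂ)/2)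
  rw [show 2*((x:ℂ)/2) = (x:ℂ) by ring] at hcC hsC
  rw [Complex.exp_mul_I, Complex.exp_mul_I]
  push_cast
  linear_combination hcC + Complex.I * hsC

lemma one_sub_exp (x : ℝ) : (1:ℂ) - Complex.exp ((x:ℂ)*Complex.I)
    = ((2*Real.sin (x/2) : ℝ):ℂ) * Complex.exp (((x/2 - π/2 : ℝ):ℂ)*Complex.I) := by
  have hcC := Complex.cos_two_mul ((x:ℂ)/2)
  have hsC := Complex.sin_two_mul ((x:ℂ)/2)
  have hp := Complex.sin_sq_add_cos_sq ((x:ℂ)/2)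
  rw [show 2*((x:ℂ)/2) = (x:ℂ) by ring] at hcC hsC
  rw [Complex.exp_mul_I, Complex.exp_mul_I]
  push_cast
  rw [Complex.cos_sub, Complex.sin_sub, ccos_pi_div_two, csin_pi_div_two]
  linear_combination -hcC - 2*hp - Complex.I * hsC

lemma lemA (x : ℝ) (hx0 : 0 < x) (hxpi : x < π) :
    Tendsto (fun n => ∑ k ∈ range n, Real.sin ((2*k+1)*x) / (2*k+1)) atTop (𝓝 (π/4)) := by
  obtain ⟨l, hl⟩ := conv_exists x hx0 hxpi
  have abel := Real.tendsto_tsum_powerSeries_nhdsWithin_lt hl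
  have m : 𝓝[<] (1 : ℝ) ≤ 𝓝 1 := tendsto_nhdsWithin_of_tendsto_nhds fun _ a ↦ a
  have q : Tendsto (fun y : ℝ ↦ y ^ 2) (𝓝[<] 1) (𝓝[<] 1) := by
    have q1 : Tendsto (fun y : ℝ => y^2) (𝓝[<] 1) (𝓝 1) := by
      have h2 : Tendsto (fun y : ℝ => y^2) (𝓝 1) (𝓝 1) := by
        simpa using (continuous_pow 2).tendsto (1:ℝ)
      exact h2.mono_left m
    apply tendsto_nhdsWithin_of_tendsto_nhds_of_eventually_within _ q1
    have hmem : Set.Ioo (-1:ℝ) 1 ∈ 𝓝[<] (1:ℝ) := by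
      rw [mem_nhdsLT_iff_exists_Ioo_subset]; exact ⟨-1, by simp⟩
    filter_upwards [hmem] with y hy
    rw [Set.mem_Iio]
    nlinarith [hy.1, hy.2]
  replace abel := (abel.comp q).mul m
  rw [mul_one] at abel
  replace abel : Tendsto (fun y : ℝ =>
      ((Complex.log (1 + (y:ℂ) * Complex.exp ((x:ℂ)*Complex.I))
        - Complex.log (1 - (y:ℂ) * Complex.exp ((x:ℂ)*Complex.I)))/2).im) (𝓝[<] 1) (𝓝 l) := by
    apply abel.congr'
    rw [eventuallyEq_nhdsWithin_iff, Metric.eventually_nhds_iff]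
    refine ⟨1, zero_lt_one, fun y hy1 hy2 => ?_⟩
    rw [Real.dist_eq, abs_sub_lt_iff] at hy1
    rw [Set.mem_Iio] at hy2
    have ny : |y| < 1 := abs_lt.mpr ⟨by linarith [hy1.1, hy1.2], hy2⟩
    simp only [Function.comp_apply]
    rw [← tsum_mul_right, ← (hasSum_logIm x y ny).tsum_eq]
    exact tsum_congr fun k => by rw [← pow_mul]; ring
  have hsx : 0 < Real.sin x := Real.sin_pos_of_pos_of_lt_pi hx0 hxpi
  have hcx : -1 < Real.cos x := by
    have := Real.cos_lt_cos_of_nonneg_of_le_pi hx0.le le_rfl hxpi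
    rw [Real.cos_pi] at this; linarith
  have hre : (0:ℝ) < ((1:ℂ) + Complex.exp ((x:ℂ)*Complex.I)).re := by
    simp only [Complex.add_re, Complex.one_re, Complex.exp_ofReal_mul_I_re]
    linarith
  have him : ((1:ℂ) - Complex.exp ((x:ℂ)*Complex.I)).im ≠ 0 := by
    simp only [Complex.sub_im, Complex.one_im, Complex.exp_ofReal_mul_I_im, zero_sub, ne_eq,
      neg_eq_zero]
    linarith
  have hcont : Tendsto (fun y : ℝ =>
      ((Complex.log (1 + (y:ℂ) * Complex.exp ((x:ℂ)*Complex.I))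
        - Complex.log (1 - (y:ℂ) * Complex.exp ((x:ℂ)*Complex.I)))/2).im) (𝓝[<] 1)
      (𝓝 (((Complex.log (1 + Complex.exp ((x:ℂ)*Complex.I))
        - Complex.log (1 - Complex.exp ((x:ℂ)*Complex.I)))/2).im)) := by
    apply Tendsto.mono_left _ m
    have t0 : Tendsto (fun y : ℝ => (y:ℂ) * Complex.exp ((x:ℂ)*Complex.I)) (𝓝 1)
        (𝓝 (Complex.exp ((x:ℂ)*Complex.I))) := by
      simpa using (Complex.continuous_ofReal.tendsto (1:ℝ)).mul_const _
    have t1 := t0.const_add (1:ℂ)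
    have t2 := t0.const_sub (1:ℂ)
    have l1 := t1.clog (Or.inl hre)
    have l2 := t2.clog (Or.inr him)
    exact (Complex.continuous_im.tendsto _).comp ((l1.sub l2).div_const 2)
  have hlG := tendsto_nhds_unique abel hcont
  have hc2 : 0 < Real.cos (x/2) :=
    Real.cos_pos_of_mem_Ioo ⟨by linarith [Real.pi_pos], by linarith⟩
  have hs2 : 0 < Real.sin (x/2) := Real.sin_pos_of_pos_of_lt_pi (by linarith) (by linarith)
  have a1 : Complex.arg (1 + Complex.exp ((x:ℂ)*Complex.I)) = x/2 := by
    rw [one_add_exp x, Complex.arg_real_mul _ (by linarith), arg_exp_self]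
    exact ⟨by linarith [Real.pi_pos], by linarith⟩
  have a2 : Complex.arg (1 - Complex.exp ((x:ℂ)*Complex.I)) = x/2 - π/2 := by
    rw [one_sub_exp x, Complex.arg_real_mul _ (by linarith), arg_exp_self]
    exact ⟨by linarith [Real.pi_pos], by linarith [Real.pi_pos]⟩
  have e2 : ∀ z:ℂ, (z/2).im = z.im/2 := fun z => by
    rw [show (2:ℂ) = ((2:ℝ):ℂ) by norm_num, Complex.div_ofReal_im]
  have hval : ((Complex.log (1 + Complex.exp ((x:ℂ)*Complex.I))
      - Complex.log (1 - Complex.exp ((x:ℂ)*Complex.I)))/2).im = π/4 := by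
    rw [e2, Complex.sub_im, Complex.log_im, Complex.log_im, a1, a2]
    ring
  rw [hlG, hval] at hl
  exact hl

lemma partial_id (θ : ℝ) (hθs : Real.sin θ ≠ 0) (M : ℕ) :
    ∑ l ∈ range M, ((l:ℝ)+1)/(-3/4 - (l:ℝ)*((l:ℝ)+2)) * (Real.sin (((l:ℝ)+1)*θ)/Real.sin θ)
    = -(1/Real.sin θ) * (2*Real.cos (θ/2) *
        (∑ k ∈ range (M+1), Real.sin ((2*(k:ℝ)+1)*(θ/2))/(2*(k:ℝ)+1))
        - Real.sin (((M:ℝ)+1)*θ)/(2*(M:ℝ)+1)) := by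
  have e3 : Real.sin θ = 2 * Real.sin (θ/2) * Real.cos (θ/2) := by
    have := Real.sin_two_mul (θ/2); rw [show 2*(θ/2) = θ by ring] at this; linarith
  have e4 : Real.cos θ = 2 * Real.cos (θ/2)^2 - 1 := by
    have := Real.cos_two_mul (θ/2); rw [show 2*(θ/2) = θ by ring] at this; linarith
  have hprod : 2 * Real.sin (θ/2) * Real.cos (θ/2) ≠ 0 := e3 ▸ hθs
  have hsh : Real.sin (θ/2) ≠ 0 := fun h => hprod (by rw [h]; ring)
  have hch : Real.cos (θ/2) ≠ 0 := fun h => hprod (by rw [h]; ring)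
  induction M with
  | zero =>
    rw [Finset.sum_range_zero, Finset.sum_range_one]
    push_cast
    rw [show (2*(0:ℝ)+1)*(θ/2) = θ/2 by ring, show ((0:ℝ)+1)*θ = θ by ring, e3]
    field_simp
    ring
  | succ M ih =>
    rw [Finset.sum_range_succ, ih, Finset.sum_range_succ _ (M+1)]
    set A := ∑ k ∈ range (M+1), Real.sin ((2*(k:ℝ)+1)*(θ/2))/(2*(k:ℝ)+1) with hA
    push_cast
    have e1 : Real.sin ((2*((M:ℝ)+1)+1)*(θ/2))
        = Real.sin (((M:ℝ)+1)*θ) * Real.cos (θ/2) + Real.cos (((M:ℝ)+1)*θ) * Real.sin (θ/2) := by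
      rw [show (2*((M:ℝ)+1)+1)*(θ/2) = ((M:ℝ)+1)*θ + θ/2 by ring, Real.sin_add]
    have e2 : Real.sin (((M:ℝ)+1+1)*θ)
        = Real.sin (((M:ℝ)+1)*θ) * Real.cos θ + Real.cos (((M:ℝ)+1)*θ) * Real.sin θ := by
      rw [show ((M:ℝ)+1+1)*θ = ((M:ℝ)+1)*θ + θ by ring, Real.sin_add]
    rw [e1, e2, e4, e3]
    have hM1 : (2*(M:ℝ)+1) ≠ 0 := by positivity
    have hM3 : (2*((M:ℝ)+1)+1) ≠ 0 := by positivity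
    have hden : -3/4 - (M:ℝ)*((M:ℝ)+2) ≠ 0 := by
      have h0 : (0:ℝ) ≤ (M:ℝ) := Nat.cast_nonneg M
      nlinarith
    have hterm : ((M:ℝ)+1)/(-3/4 - (M:ℝ)*((M:ℝ)+2))
        = -(1/(2*(M:ℝ)+1) + 1/(2*((M:ℝ)+1)+1)) := by
      rw [div_eq_iff hden]
      field_simp
      ring
    rw [hterm]
    field_simp
    ring

open Filter in
/-- For `θ ∈ (0,π)`, `t = cos θ`, the partial sums
`∑_{l=0}^N (l+1)/(-3/4 - l(l+2)) sin((l+1)θ)/sin θ` converge, as `N → ∞`, to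
`(-1/(4√2))·((1 + t)/√(1 - t) + √(1 - t))·π`. -/
theorem stmt_16 (θ : ℝ) (hθ : θ ∈ Set.Ioo 0 Real.pi) (t : ℝ) (ht : t = Real.cos θ) :
    Tendsto (fun N : ℕ => ∑ l ∈ Finset.range (N + 1),
        ((l : ℝ) + 1) / (-3 / 4 - (l : ℝ) * ((l : ℝ) + 2)) *
          (Real.sin (((l : ℝ) + 1) * θ) / Real.sin θ))
      atTop
      (nhds (-1 / (4 * Real.sqrt 2) *
        ((1 + t) / Real.sqrt (1 - t) + Real.sqrt (1 - t)) * Real.pi)) := by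
  subst ht
  obtain ⟨hθ0, hθπ⟩ := hθ
  have hsθpos : 0 < Real.sin θ := Real.sin_pos_of_pos_of_lt_pi hθ0 hθπ
  have hsθ : Real.sin θ ≠ 0 := ne_of_gt hsθpos
  have hs2 : 0 < Real.sin (θ/2) :=
    Real.sin_pos_of_pos_of_lt_pi (by linarith) (by linarith [Real.pi_pos])
  have hc2 : 0 < Real.cos (θ/2) :=
    Real.cos_pos_of_mem_Ioo ⟨by linarith [Real.pi_pos], by linarith⟩
  have hV : Tendsto (fun N : ℕ => ∑ k ∈ range (N+1+1),
      Real.sin ((2*(k:ℝ)+1)*(θ/2))/(2*(k:ℝ)+1)) atTop (𝓝 (π/4)) := by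
    exact (lemA (θ/2) (by linarith) (by linarith [Real.pi_pos])).comp
      (tendsto_add_atTop_nat 2)
  have hB : Tendsto (fun N : ℕ =>
      Real.sin ((((N+1:ℕ):ℝ)+1)*θ)/(2*((N+1:ℕ):ℝ)+1)) atTop (𝓝 0) := by
    have hg : Tendsto (fun N : ℕ => (2*((N:ℝ)+1)+1)⁻¹) atTop (𝓝 0) := by
      apply Tendsto.inv_tendsto_atTop
      apply tendsto_atTop_add_const_right
      apply Tendsto.const_mul_atTop zero_lt_two
      exact tendsto_atTop_add_const_right _ _ tendsto_natCast_atTop_atTop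
    apply squeeze_zero_norm _ hg
    intro N
    push_cast
    have hden : (0:ℝ) < 2*((N:ℝ)+1)+1 := by positivity
    rw [Real.norm_eq_abs, abs_div, abs_of_pos hden, div_eq_mul_inv]
    nth_rewrite 2 [← one_mul (2*((N:ℝ)+1)+1)⁻¹]
    gcongr
    exact Real.abs_sin_le_one _
  have h3 := ((hV.const_mul (2*Real.cos (θ/2))).sub hB).const_mul (-(1/Real.sin θ))
  have hval : -(1/Real.sin θ) * (2*Real.cos (θ/2) * (π/4) - 0)
      = -1 / (4 * Real.sqrt 2) *
        ((1 + Real.cos θ) / Real.sqrt (1 - Real.cos θ) + Real.sqrt (1 - Real.cos θ)) * π := by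
    have hcd : Real.cos θ = 2 * Real.cos (θ/2)^2 - 1 := by
      have := Real.cos_two_mul (θ/2); rw [show 2*(θ/2) = θ by ring] at this; linarith
    have hsd : Real.sin θ = 2 * Real.sin (θ/2) * Real.cos (θ/2) := by
      have := Real.sin_two_mul (θ/2); rw [show 2*(θ/2) = θ by ring] at this; linarith
    have hpy := Real.sin_sq_add_cos_sq (θ/2)
    have h1t : 1 - Real.cos θ = 2 * Real.sin (θ/2)^2 := by rw [hcd]; nlinarith
    have h2t : 1 + Real.cos θ = 2 * Real.cos (θ/2)^2 := by rw [hcd]; ring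
    have hsqrt : Real.sqrt (1 - Real.cos θ) = Real.sqrt 2 * Real.sin (θ/2) := by
      rw [h1t, show (2:ℝ) * Real.sin (θ/2)^2 = 2 * Real.sin (θ/2)^2 by ring,
        Real.sqrt_mul (by norm_num) _, Real.sqrt_sq hs2.le]
    have hrt2 : (0:ℝ) < Real.sqrt 2 := Real.sqrt_pos.mpr (by norm_num)
    have hrt2sq : Real.sqrt 2 * Real.sqrt 2 = 2 := Real.mul_self_sqrt (by norm_num)
    rw [hsqrt, h2t, hsd]
    field_simp
    linear_combination (Real.cos (θ/2)*π*(-2*(1-Real.sin (θ/2)^2)))*hrt2sq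
      + (Real.cos (θ/2)*π*4)*hpy
  rw [show -1 / (4 * Real.sqrt 2) *
        ((1 + Real.cos θ) / Real.sqrt (1 - Real.cos θ) + Real.sqrt (1 - Real.cos θ)) * Real.pi
      = -(1/Real.sin θ) * (2*Real.cos (θ/2) * (π/4) - 0) from hval.symm]
  exact h3.congr fun N => (partial_id θ hsθ (N+1)).symm
end

section
/- Let κ < J be nonnegative integers and let 𝐭 > 0 be real. Then at every real R > 0, the function R ↦ 𝐭^{κ−J} · ∑_{ι=0}^{J−κ−1} C(J−κ−1,ι) · ((−1)^{J−κ−ι−1}/(2(J−ι)−1)) · (R²/(𝐭 + R²))^{J−ι−1/2} has derivative equal to R^{2κ}/(𝐭 + R²)^{J+1/2}. -/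
/-- For nonnegative integers `κ < J`, a real `𝐭 > 0`, and every real
`R > 0`, the function
`R ↦ 𝐭^{κ-J}·∑_{ι=0}^{J-κ-1} C(J-κ-1,ι)·((-1)^{J-κ-ι-1}/(2(J-ι)-1))·(R²/(𝐭+R²))^{J-ι-1/2}`
has derivative `R^{2κ}/(𝐭+R²)^{J+1/2}` at `R`. -/
theorem stmt_18 (κ J : ℕ) (hκJ : κ < J) (T : ℝ) (hT : 0 < T) (R : ℝ) (hR : 0 < R) :
    HasDerivAt (fun R : ℝ =>
        T ^ ((κ : ℤ) - (J : ℤ)) *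
          ∑ ι ∈ Finset.range (J - κ),
            ((J - κ - 1).choose ι : ℝ) *
              ((-1 : ℝ) ^ (J - κ - ι - 1) / (2 * ((J : ℝ) - (ι : ℝ)) - 1)) *
                (R ^ 2 / (T + R ^ 2)) ^ ((J : ℝ) - (ι : ℝ) - 1/2))
      (R ^ (2 * κ) / (T + R ^ 2) ^ ((J : ℝ) + 1/2)) R := by
  have hA : (0:ℝ) < T + R ^ 2 := by positivity
  set m : ℕ := J - κ - 1 with hm
  have hmk : J - κ = m + 1 := by omega
  -- derivative of the inner rational function
  have hu : HasDerivAt (fun R : ℝ => R ^ 2 / (T + R ^ 2))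
      (2 * R * T / (T + R ^ 2) ^ 2) R := by
    have h1 : HasDerivAt (fun R : ℝ => R ^ 2) (2 * R) R := by
      simpa using hasDerivAt_pow 2 R
    have h2 : HasDerivAt (fun R : ℝ => T + R ^ 2) (2 * R) R := by
      exact h1.const_add T
    have h3 := h1.div h2 hA.ne'
    convert h3 using 1
    on_goal 1 => rfl
    on_goal 1 => rfl
    on_goal 1 => rfl
    field_simp
    ring
  have hupos : (0:ℝ) < R ^ 2 / (T + R ^ 2) := by positivity
  have key : ∀ ι ∈ Finset.range (J - κ),
      HasDerivAt (fun R : ℝ =>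
          (m.choose ι : ℝ) *
            ((-1 : ℝ) ^ (J - κ - ι - 1) / (2 * ((J : ℝ) - (ι : ℝ)) - 1)) *
              (R ^ 2 / (T + R ^ 2)) ^ ((J : ℝ) - (ι : ℝ) - 1/2))
        ((T + R ^ 2) ^ ι * (-(R ^ 2)) ^ (m - ι) * (m.choose ι : ℝ) *
          (T * R ^ (2 * κ) / (T + R ^ 2) ^ ((J : ℝ) + 1/2))) R := by
    intro ι hι
    rw [Finset.mem_range, hmk] at hι
    have hιm : ι ≤ m := by omega
    set q : ℕ := m - ι with hq
    have hJq : J = κ + q + ι + 1 := by omega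
    have hqR : (q : ℝ) = (J : ℝ) - κ - 1 - ι := by
      have h : ((q + ι + κ + 1 : ℕ) : ℝ) = (J : ℝ) := by
        exact_mod_cast congrArg (Nat.cast : ℕ → ℝ) (by omega : q + ι + κ + 1 = J)
      push_cast at h
      linarith
    have hsub : J - κ - ι - 1 = q := by omega
    have hιJ : (ι : ℝ) ≤ (J : ℝ) - 1 := by
      have h : ((ι + 1 : ℕ) : ℝ) ≤ (J : ℝ) := by exact_mod_cast Nat.cast_le.2 (by omega : ι + 1 ≤ J)
      push_cast at h
      linarith
    set p : ℝ := (J : ℝ) - (ι : ℝ) - 1/2 with hp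
    have hppos : (0:ℝ) < p := by rw [hp]; linarith
    have hpne : p ≠ 0 := hppos.ne'
    have h2p : 2 * ((J : ℝ) - (ι : ℝ)) - 1 = 2 * p := by rw [hp]; ring
    -- the square root of T + R²
    set s : ℝ := (T + R ^ 2) ^ ((1:ℝ)/2) with hs
    have hspos : 0 < s := Real.rpow_pos_of_pos hA _
    have hs2 : s ^ 2 = T + R ^ 2 := by
      rw [hs, ← Real.rpow_natCast ((T + R ^ 2) ^ ((1:ℝ)/2)) 2, ← Real.rpow_mul hA.le]
      norm_num
    -- split the rpow exponent p - 1 into a natural power and -1/2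
    have hhalf : (R ^ 2 / (T + R ^ 2)) ^ ((1:ℝ)/2) = R / s := by
      rw [Real.div_rpow (sq_nonneg R) hA.le, hs]
      congr 1
      rw [← Real.rpow_natCast R 2, ← Real.rpow_mul hR.le]
      norm_num
    have hu12 : (R ^ 2 / (T + R ^ 2)) ^ (p - 1)
        = (R ^ 2 / (T + R ^ 2)) ^ (κ + q : ℕ) * (s / R) := by
      rw [show p - 1 = ((κ + q : ℕ) : ℝ) + (-(1/2)) by push_cast [hqR, hp]; ring,
        Real.rpow_add hupos, Real.rpow_natCast]
      congr 1
      rw [show (-(1/2) : ℝ) = -((1:ℝ)/2) by norm_num, Real.rpow_neg hupos.le, hhalf,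
        inv_div]
    -- the A^(J+1/2) factor
    have hAJ : (T + R ^ 2) ^ ((J : ℝ) + 1/2) = (T + R ^ 2) ^ J * s := by
      rw [Real.rpow_add hA, Real.rpow_natCast, hs]
    -- core computational identity
    have hcore : R / (T + R ^ 2) ^ 2 * (R ^ 2 / (T + R ^ 2)) ^ (p - 1)
        = (T + R ^ 2) ^ ι * (R ^ 2) ^ q * R ^ (2 * κ)
          / (T + R ^ 2) ^ ((J : ℝ) + 1/2) := by
      rw [hu12, hAJ, hJq, ← hs2]
      field_simp
      rw [div_pow]
      field_simp
      ring
    -- assemble the term derivative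
    have hderiv := (hu.rpow_const (p := p) (Or.inl hupos.ne')).const_mul
      ((m.choose ι : ℝ) * ((-1 : ℝ) ^ (J - κ - ι - 1) / (2 * ((J : ℝ) - (ι : ℝ)) - 1)))
    convert hderiv using 1
    on_goal 1 => rfl
    on_goal 1 => rfl
    rw [hsub, h2p, neg_pow]
    have hstep : ((-1:ℝ)) ^ q / (2 * p) * (2 * R * T / (T + R ^ 2) ^ 2 * p
          * (R ^ 2 / (T + R ^ 2)) ^ (p - 1))
        = (-1:ℝ) ^ q * T * (R / (T + R ^ 2) ^ 2 * (R ^ 2 / (T + R ^ 2)) ^ (p - 1)) := by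
      field_simp
    linear_combination (-(m.choose ι : ℝ) * (-1:ℝ) ^ q * T) * hcore
      - (m.choose ι : ℝ) * hstep
  -- sum up
  have hsum := (HasDerivAt.fun_sum key).const_mul (T ^ ((κ : ℤ) - (J : ℤ)))
  convert hsum using 1
  on_goal 1 => rfl
  on_goal 1 => rfl
  rw [← Finset.sum_mul, hmk, ← add_pow,
    show T + R ^ 2 + -(R ^ 2) = T by ring]
  have hone : (T:ℝ) ^ ((κ : ℤ) - (J : ℤ)) * (T ^ m * T) = 1 := by
    have h1 : (T:ℝ) ^ m * T = T ^ ((J : ℤ) - (κ : ℤ)) := by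
      rw [← zpow_natCast T m, ← zpow_add_one₀ hT.ne',
        show (m : ℤ) + 1 = (J : ℤ) - (κ : ℤ) by omega]
    rw [h1, ← zpow_add₀ hT.ne', show (κ : ℤ) - (J : ℤ) + ((J : ℤ) - (κ : ℤ)) = 0 by ring,
      zpow_zero]
  linear_combination (-(R ^ (2 * κ) / (T + R ^ 2) ^ ((J : ℝ) + 1/2))) * hone
end

section
/- Let m be a nonnegative integer, λ = m + 1/2, and t ∈ (-1,1); write 𝐭 = 1 − t² and, for r ∈ (0,1), 𝐫 = r − t, so that 𝐭 + 𝐫² = 1 − 2tr + r². Define rational numbers Q_0, …, Q_{m−1} (depending on 𝐭 and λ) by 1 = 2(λ−1)Q_0, 0 = 2(λ−2)Q_1 − [(2λ−3) + 2(λ−1)𝐭]Q_0, and 0 = 2(λ−j−1)Q_j − [(2λ−2j−1) + 2(λ−j)𝐭]Q_{j−1} + (2λ−2j+1)𝐭 Q_{j−2} for j = 2,…,m−1. Then at every r ∈ (0,1), the function r ↦ 1/(λ(𝐭+𝐫²)^λ) + (1/2)∑_{j=1}^{m} 1/((λ−j)(𝐭+𝐫²)^{λ−j}) + ∑_{j=1}^{m}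 t·Q_{j−1}·𝐫/(𝐭^j (𝐭+𝐫²)^{λ−j}) − log(𝐭 − t𝐫 + √(𝐭+𝐫²)) has derivative equal to (1 − r²)/(r(1 − 2tr + r²)^{λ+1}) − 1/r, where the sums over j are empty when m = 0. -/
set_option maxHeartbeats 1600000


/-- Let `m : ℕ`, `λ = m + 1/2`, `t ∈ (-1,1)`, `𝐭 = 1 - t²`, and for
`r ∈ (0,1)` write `𝐫 = r - t` (so `𝐭 + 𝐫² = 1 - 2tr + r²`). Let `Q 0, …, Q (m-1)` be
given by the recursion `1 = 2(λ-1)Q₀`, `0 = 2(λ-2)Q₁ - [(2λ-3) + 2(λ-1)𝐭]Q₀`, and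
`0 = 2(λ-j-1)Q_j - [(2λ-2j-1) + 2(λ-j)𝐭]Q_{j-1} + (2λ-2j+1)𝐭 Q_{j-2}` for
`2 ≤ j ≤ m-1`. Then at every `r ∈ (0,1)` the function
`r ↦ 1/(λ(𝐭+𝐫²)^λ) + (1/2)∑_{j=1}^{m} 1/((λ-j)(𝐭+𝐫²)^{λ-j})
   + ∑_{j=1}^{m} t·Q_{j-1}·𝐫/(𝐭^j (𝐭+𝐫²)^{λ-j}) - log(𝐭 - t𝐫 + √(𝐭+𝐫²))`
has derivative `(1 - r²)/(r(1 - 2tr + r²)^{λ+1}) - 1/r`. -/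
theorem stmt_19 (m : ℕ) (lam : ℝ) (hlam : lam = (m : ℝ) + 1/2)
    (t : ℝ) (ht : t ∈ Set.Ioo (-1:ℝ) 1) (T : ℝ) (hT : T = 1 - t ^ 2)
    (Q : ℕ → ℝ)
    (hQ0 : 0 < m → 1 = 2 * (lam - 1) * Q 0)
    (hQ1 : 1 < m → 0 = 2 * (lam - 2) * Q 1 - ((2 * lam - 3) + 2 * (lam - 1) * T) * Q 0)
    (hQrec : ∀ j : ℕ, 2 ≤ j → j < m →
      0 = 2 * (lam - (j : ℝ) - 1) * Q j
        - ((2 * lam - 2 * (j : ℝ) - 1) + 2 * (lam - (j : ℝ)) * T) * Q (j - 1)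
        + (2 * lam - 2 * (j : ℝ) + 1) * T * Q (j - 2))
    (r : ℝ) (hr : r ∈ Set.Ioo (0:ℝ) 1) :
    HasDerivAt (fun r : ℝ =>
        1 / (lam * (T + (r - t) ^ 2) ^ lam)
          + 1/2 * ∑ j ∈ Finset.Icc 1 m,
              1 / ((lam - (j : ℝ)) * (T + (r - t) ^ 2) ^ (lam - (j : ℝ)))
          + ∑ j ∈ Finset.Icc 1 m,
              t * Q (j - 1) * (r - t) / (T ^ j * (T + (r - t) ^ 2) ^ (lam - (j : ℝ)))
          - Real.log (T - t * (r - t) + Real.sqrt (T + (r - t) ^ 2)))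
      ((1 - r ^ 2) / (r * (1 - 2 * t * r + r ^ 2) ^ (lam + 1)) - 1 / r) r := by
  obtain ⟨ht1, ht2⟩ := ht
  obtain ⟨hr0, hr1⟩ := hr
  have hrne : r ≠ 0 := ne_of_gt hr0
  have hT0 : 0 < T := by rw [hT]; nlinarith
  have hTne : T ≠ 0 := hT0.ne'
  have hg : ∀ x : ℝ, 0 < T + (x - t) ^ 2 := fun x => by positivity
  have hlam0 : lam ≠ 0 := by rw [hlam]; positivity
  have hlamj : ∀ j : ℕ, lam - (j : ℝ) ≠ 0 := by
    intro j h
    have h2 : (2 * m + 1 : ℝ) = 2 * j := by rw [hlam] at h; push_cast at h ⊢; linarith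
    have h3 : (2 * m + 1 : ℕ) = 2 * j := by exact_mod_cast h2
    omega
  set U : ℝ := T + (r - t) ^ 2 with hU
  have hU0 : 0 < U := hg r
  have hUne : U ≠ 0 := hU0.ne'
  set S : ℝ := Real.sqrt U with hSdef
  have hS0 : 0 < S := Real.sqrt_pos.mpr hU0
  have hSne : S ≠ 0 := hS0.ne'
  have hS2 : S ^ 2 = U := Real.sq_sqrt hU0.le
  set A : ℝ := U ^ (lam + 1) with hA
  have hA0 : 0 < A := Real.rpow_pos_of_pos hU0 _
  have hAne : A ≠ 0 := hA0.ne'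
  have hfA : ∀ k : ℕ, U ^ ((k : ℝ) - (lam + 1)) = U ^ k / A := by
    intro k
    rw [Real.rpow_sub hU0, Real.rpow_natCast, ← hA]
  have hAS : A = U ^ (m + 1) * S := by
    rw [hA, show lam + 1 = ((m + 1 : ℕ) : ℝ) + 1/2 by push_cast [hlam]; ring,
      Real.rpow_add hU0, Real.rpow_natCast, hSdef, Real.sqrt_eq_rpow]
  -- derivative of the inner function
  have hgd : HasDerivAt (fun x : ℝ => T + (x - t) ^ 2) (2 * (r - t)) r := by
    have h0 : HasDerivAt (fun x : ℝ => x - t) 1 r := (hasDerivAt_id r).sub_const t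
    have h1 := (h0.pow 2).const_add T
    refine h1.congr_deriv (Eq.symm ?_)
    norm_num
  -- piece 1
  have h1 : HasDerivAt (fun x : ℝ => 1 / (lam * (T + (x - t) ^ 2) ^ lam))
      (-(2 * (r - t)) / A) r := by
    have e : (fun x : ℝ => 1 / (lam * (T + (x - t) ^ 2) ^ lam))
        = fun x => lam⁻¹ * (T + (x - t) ^ 2) ^ (-lam) := by
      funext x
      rw [Real.rpow_neg (hg x).le, one_div, mul_inv]
    rw [e]
    have hd := (hgd.rpow_const (p := -lam) (Or.inl (hg r).ne')).const_mul lam⁻¹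
    refine hd.congr_deriv (Eq.symm ?_)
    rw [← hU, show -lam - 1 = (0 : ℝ) - (lam + 1) by ring,
      show ((0 : ℝ)) = ((0 : ℕ) : ℝ) by norm_num, hfA 0]
    field_simp
  -- piece 2 summands
  have hsum1 : ∀ j ∈ Finset.Icc 1 m,
      HasDerivAt (fun x : ℝ => 1 / ((lam - (j : ℝ)) * (T + (x - t) ^ 2) ^ (lam - (j : ℝ))))
        (-(2 * (r - t)) * (U ^ j / A)) r := by
    intro j _
    have hne := hlamj j
    have e : (fun x : ℝ => 1 / ((lam - (j : ℝ)) * (T + (x - t) ^ 2) ^ (lam - (j : ℝ))))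
        = fun x => (lam - (j : ℝ))⁻¹ * (T + (x - t) ^ 2) ^ (-(lam - (j : ℝ))) := by
      funext x
      rw [Real.rpow_neg (hg x).le, one_div, mul_inv]
    rw [e]
    have hd := (hgd.rpow_const (p := -(lam - (j : ℝ))) (Or.inl (hg r).ne')).const_mul
      (lam - (j : ℝ))⁻¹
    refine hd.congr_deriv (Eq.symm ?_)
    rw [← hU, show -(lam - (j : ℝ)) - 1 = (j : ℝ) - (lam + 1) by ring, hfA j]
    field_simp
  -- piece 3 summands
  have hsum2 : ∀ j ∈ Finset.Icc 1 m,
      HasDerivAt (fun x : ℝ =>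
          t * Q (j - 1) * (x - t) / (T ^ j * (T + (x - t) ^ 2) ^ (lam - (j : ℝ))))
        (t * (Q (j - 1) / T ^ j) *
          ((U ^ (j + 1) + 2 * (r - t) ^ 2 * ((j : ℝ) - lam) * U ^ j) / A)) r := by
    intro j _
    have e : (fun x : ℝ =>
        t * Q (j - 1) * (x - t) / (T ^ j * (T + (x - t) ^ 2) ^ (lam - (j : ℝ))))
        = fun x => (t * Q (j - 1) / T ^ j) * ((x - t) * (T + (x - t) ^ 2) ^ ((j : ℝ) - lam)) := by
      funext x
      rw [show (j : ℝ) - lam = -(lam - (j : ℝ)) by ring, Real.rpow_neg (hg x).le]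
      have hne := (Real.rpow_pos_of_pos (hg x) (lam - (j : ℝ))).ne'
      field_simp
      all_goals try exact Or.inl (by ring)
      all_goals ring
    rw [e]
    have hd := (((hasDerivAt_id r).sub_const t).mul
      (hgd.rpow_const (p := (j : ℝ) - lam) (Or.inl (hg r).ne'))).const_mul
      (t * Q (j - 1) / T ^ j)
    refine hd.congr_deriv (Eq.symm ?_)
    rw [← hU]
    have e1 : U ^ ((j : ℝ) - lam) = U ^ (j + 1) / A := by
      rw [show (j : ℝ) - lam = ((j + 1 : ℕ) : ℝ) - (lam + 1) by push_cast; ring, hfA (j + 1)]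
    have e2 : U ^ ((j : ℝ) - lam - 1) = U ^ j / A := by
      rw [show (j : ℝ) - lam - 1 = (j : ℝ) - (lam + 1) by ring, hfA j]
    rw [e1, e2]
    simp only [id_eq]
    have hTj : (T : ℝ) ^ j ≠ 0 := pow_ne_zero _ hTne
    field_simp
    all_goals try exact Or.inl (by ring)
    all_goals ring
  -- log piece
  have hL1 : T - t * (r - t) = 1 - t * r := by rw [hT]; ring
  have h1tr : 0 < 1 - t * r := by nlinarith
  have hLpos : 0 < T - t * (r - t) + S := by rw [hL1]; positivity
  have hS2' : S ^ 2 = 1 - 2 * t * r + r ^ 2 := by rw [hS2, hU, hT]; ring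
  have hlog : HasDerivAt
      (fun x : ℝ => Real.log (T - t * (x - t) + Real.sqrt (T + (x - t) ^ 2)))
      (1 / r - U ^ (m + 1) / (r * A)) r := by
    have hi1 : HasDerivAt (fun x : ℝ => T - t * (x - t)) (-t) r := by
      have := (((hasDerivAt_id r).sub_const t).const_mul t).const_sub T
      simpa using this
    have hi2 : HasDerivAt (fun x : ℝ => Real.sqrt (T + (x - t) ^ 2))
        (2 * (r - t) / (2 * Real.sqrt (T + (r - t) ^ 2))) r := hgd.sqrt (hg r).ne'
    have hi3 := (hi1.add hi2).log (by simp only [Pi.add_apply]; rw [← hU, ← hSdef]; exact hLpos.ne')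
    refine hi3.congr_deriv (Eq.symm ?_)
    simp only [Pi.add_apply]
    rw [← hU, ← hSdef, hL1]
    have hUm : (U : ℝ) ^ (m + 1) ≠ 0 := pow_ne_zero _ hUne
    have key1 : (-t + 2 * (r - t) / (2 * S)) / (1 - t * r + S) = (S - 1) / (r * S) := by
      rw [div_eq_div_iff (by positivity) (by positivity)]
      field_simp
      first
        | linear_combination (-S) * hS2'
        | linear_combination S * hS2'
        | linear_combination (-2*S) * hS2'
        | linear_combination (2*S) * hS2'
        | linear_combination (-r*S) * hS2'
        | linear_combination (r*S) * hS2'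
        | nlinarith [hS2', sq_nonneg S]
    rw [key1, hAS]
    field_simp
  -- the key recursion lemma
  have hK : ∀ i : ℕ, i < m →
      2 * (lam - (i : ℝ) - 1) * Q i
        - (2 * lam - 2 * (i : ℝ) - 1) * (if i = 0 then 0 else Q (i - 1)) = T ^ i := by
    intro i
    induction i using Nat.strong_induction_on with
    | _ i ih =>
      intro him
      match i with
      | 0 =>
        norm_num
        linear_combination -hQ0 him
      | 1 =>
        norm_num
        linear_combination -hQ1 him - T * hQ0 (by omega)
      | (k + 2) =>
        have ihk := ih (k + 1) (by omega) (by omega)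
        have hrec := hQrec (k + 2) (by omega) (by omega)
        simp only [Nat.add_sub_cancel, Nat.succ_ne_zero, if_false] at ihk ⊢
        push_cast at ihk hrec ⊢
        norm_num at hrec
        linear_combination -hrec + T * ihk
  -- telescoping sum
  set a : ℕ → ℝ := fun i =>
    if i = 0 then 0 else (2 * (i : ℝ) - 2 * lam + 1) * Q (i - 1) * U ^ (i + 1) / T ^ i
    with ha
  have hs2U : (r - t) ^ 2 = U - T := by rw [hU]; ring
  have hstep : ∀ i ∈ Finset.range m,
      (Q i / T ^ (i + 1)) * (U ^ (i + 2) + 2 * (r - t) ^ 2 * ((i : ℝ) + 1 - lam) * U ^ (i + 1))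
        - U ^ (i + 1) = a (i + 1) - a i := by
    intro i hi
    have him : i < m := Finset.mem_range.mp hi
    have hKi := hK i him
    match i with
    | 0 =>
      simp only [ha] at *
      norm_num at hKi ⊢
      have hTj : (T : ℝ) ≠ 0 := hTne
      field_simp
      linear_combination (2 * (1 - lam) * Q 0) * hs2U + T * hKi
    | (k + 1) =>
      simp only [ha, Nat.add_sub_cancel, Nat.succ_ne_zero, if_false] at hKi ⊢
      push_cast at hKi ⊢
      have hTj : (T : ℝ) ^ (k + 2) ≠ 0 := pow_ne_zero _ hTne
      field_simp
      linear_combination (2 * ((k : ℝ) + 2 - lam) * Q (k + 1) * U ^ (k + 2) * T ^ (k + 1)) * hs2U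
        + (U ^ (k + 2) * T ^ (k + 2)) * hKi
  have ha0 : a 0 = 0 := by simp [ha]
  have ham : a m = 0 := by
    rcases Nat.eq_zero_or_pos m with hm | hm
    · rw [hm, ha0]
    · have hmne : m ≠ 0 := Nat.pos_iff_ne_zero.mp hm
      have hz : 2 * (m : ℝ) - 2 * lam + 1 = 0 := by rw [hlam]; ring
      simp [ha, hmne, hz]
  have hWP : ∑ i ∈ Finset.range m,
      (Q i / T ^ (i + 1)) * (U ^ (i + 2) + 2 * (r - t) ^ 2 * ((i : ℝ) + 1 - lam) * U ^ (i + 1))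
      = ∑ i ∈ Finset.range m, U ^ (i + 1) := by
    have htel := Finset.sum_congr rfl hstep
    rw [Finset.sum_range_sub a m, ham, ha0, sub_zero] at htel
    rw [Finset.sum_sub_distrib] at htel
    linarith [htel]
  -- geometric sum
  have hgeo : (U - 1) * ∑ i ∈ Finset.range m, U ^ (i + 1) = U ^ (m + 1) - U := by
    have hgs := geom_sum_mul U m
    have hP : ∑ i ∈ Finset.range m, U ^ (i + 1) = (∑ i ∈ Finset.range m, U ^ i) * U := by
      rw [Finset.sum_mul]
      exact Finset.sum_congr rfl fun i _ => pow_succ U i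
    rw [hP]
    linear_combination U * hgs
  -- reindexing helper
  have hre : ∀ f : ℕ → ℝ, ∑ j ∈ Finset.Icc 1 m, f j = ∑ i ∈ Finset.range m, f (i + 1) := by
    intro f
    rw [← Finset.Ico_add_one_right_eq_Icc, Finset.sum_Ico_eq_sum_range]
    try simp only [Nat.add_sub_cancel]
    exact Finset.sum_congr rfl fun i _ => by rw [add_comm]
  -- assemble
  have H := ((h1.add ((HasDerivAt.fun_sum hsum1).const_mul (1/2 : ℝ))).add
    (HasDerivAt.fun_sum hsum2)).sub hlog
  have hval : -(2 * (r - t)) / A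
      + 1/2 * (∑ j ∈ Finset.Icc 1 m, -(2 * (r - t)) * (U ^ j / A))
      + (∑ j ∈ Finset.Icc 1 m, t * (Q (j - 1) / T ^ j) *
          ((U ^ (j + 1) + 2 * (r - t) ^ 2 * ((j : ℝ) - lam) * U ^ j) / A))
      - (1 / r - U ^ (m + 1) / (r * A))
      = (1 - r ^ 2) / (r * (1 - 2 * t * r + r ^ 2) ^ (lam + 1)) - 1 / r := by
    rw [show (1 - 2 * t * r + r ^ 2 : ℝ) = U by rw [hU, hT]; ring, ← hA]
    rw [hre fun j => -(2 * (r - t)) * (U ^ j / A)]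
    rw [hre fun j => t * (Q (j - 1) / T ^ j) *
      ((U ^ (j + 1) + 2 * (r - t) ^ 2 * ((j : ℝ) - lam) * U ^ j) / A)]
    simp only [Nat.add_sub_cancel]
    push_cast
    have e1 : ∑ i ∈ Finset.range m, -(2 * (r - t)) * (U ^ (i + 1) / A)
        = -(2 * (r - t)) * ((∑ i ∈ Finset.range m, U ^ (i + 1)) / A) := by
      rw [Finset.sum_div, Finset.mul_sum]
    have e2 : ∑ i ∈ Finset.range m, t * (Q i / T ^ (i + 1)) *
        ((U ^ (i + 1 + 1) + 2 * (r - t) ^ 2 * ((i : ℝ) + 1 - lam) * U ^ (i + 1)) / A)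
        = t * ((∑ i ∈ Finset.range m, U ^ (i + 1)) / A) := by
      rw [← hWP, Finset.sum_div, Finset.mul_sum]
      exact Finset.sum_congr rfl fun i _ => by ring
    rw [e1, e2]
    set P : ℝ := ∑ i ∈ Finset.range m, U ^ (i + 1) with hPdef
    have hU2 : U = 1 - 2 * t * r + r ^ 2 := by rw [hU, hT]; ring
    field_simp
    linear_combination (-1 : ℝ) * hgeo + (1 + P) * hU2
  rw [← hval]
  exact H
end
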